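/- arXiv:2006.13787 — 4 statements merged into one kernel-verified Lean document; each statement's English description precedes it below -/
import Mathlib

section
/- (Uniqueness theorem) Let S be a quasi-fundamental inverse semigroup with zero whose semilattice of idempotents is 0-disjunctive, let K be a field, and let I be the singular ideal of K₀S. Then for every ideal J of K₀S the following are equivalent: (1) J ∩ S = {0}; (2) J ∩ E(S) = {0}; (3) J ⊆ I. In particular, every ideal of K₀S not contained in I contains a non-zero idempotent of S. -/
/-- An inverse semigroup with zero. -/
class InverseSemigroup0 (S : Type*) extends Semigroup S, Zero S, Star S where
  zero_mul : ∀ s : S, 0 * s = 0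
  mul_zero : ∀ s : S, s * 0 = 0
  mul_star_mul_self : ∀ s : S, s * star s * s = s
  star_mul_self_star : ∀ s : S, star s * s * star s = star s
  star_unique : ∀ s t : S, s * t * s = s → t * s * t = t → t = star s

/-- The natural partial order on an inverse semigroup. -/
def NatLe {S : Type*} [InverseSemigroup0 S] (a b : S) : Prop := a = b * star a * a

variable (K S : Type*) [CommRing K] [InverseSemigroup0 S]

/-- The ring congruence on the semigroup algebra identifying the zero of `S`
with the zero of the algebra. -/
noncomputable def contractedCon : RingCon (MonoidAlgebra K S) :=
  ringConGen (fun a b => a = MonoidAlgebra.single (0 : S) (1 : K) ∧ b = 0)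

/-- The contracted semigroup algebra `K₀S`: the `K`-algebra with basis `S \ {0}`
and multiplication extending that of `S`, realized as the quotient of the semigroup
algebra of `S` by the span of the zero of `S`. -/
abbrev Kzero := (contractedCon K S).Quotient

/-- The quotient map onto the contracted semigroup algebra. -/
noncomputable def mk0 (a : MonoidAlgebra K S) : Kzero K S :=
  (a : (contractedCon K S).Quotient)

/-- The canonical map `S → K₀S`. -/
noncomputable def iota (s : S) : Kzero K S := mk0 K S (MonoidAlgebra.single s 1)

/-- An element of `K₀S` is singular if for every non-zero idempotent `e` there is a
non-zero idempotent `f ≤ e` with `a f = 0`. -/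
noncomputable def Singular (x : Kzero K S) : Prop :=
  ∀ e : S, IsIdempotentElem e → e ≠ 0 →
    ∃ f : S, IsIdempotentElem f ∧ f ≠ 0 ∧ NatLe f e ∧ x * iota K S f = 0

/-- `J` is a two-sided ideal of the (non-unital) ring `K₀S`. -/
def IsIdealSet (J : Set (Kzero K S)) : Prop :=
  (0 : Kzero K S) ∈ J ∧ (∀ a ∈ J, ∀ b ∈ J, a + b ∈ J) ∧ (∀ a ∈ J, -a ∈ J) ∧
    ∀ a ∈ J, ∀ x : Kzero K S, x * a ∈ J ∧ a * x ∈ J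

/-- `S` is quasi-fundamental: every non-zero element of the centralizer of `E(S)`
lies above some non-zero idempotent. -/
def QuasiFundamental (S : Type*) [InverseSemigroup0 S] : Prop :=
  ∀ s : S, s ≠ 0 → (∀ e : S, IsIdempotentElem e → s * e = e * s) →
    ∃ e : S, e ≠ 0 ∧ IsIdempotentElem e ∧ NatLe e s

/-- The semilattice of idempotents of `S` is 0-disjunctive. -/
def ZeroDisjunctive (S : Type*) [InverseSemigroup0 S] : Prop :=
  ∀ e f : S, IsIdempotentElem e → IsIdempotentElem f → f ≠ 0 → NatLe f e → f ≠ e →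
    ∃ g : S, g ≠ 0 ∧ IsIdempotentElem g ∧ NatLe g e ∧ f * g = 0


section Aux
variable {K S}

namespace SG


theorem zmul (s : S) : (0:S) * s = 0 := InverseSemigroup0.zero_mul s
theorem mulz (s : S) : s * (0:S) = 0 := InverseSemigroup0.mul_zero s
theorem sss (s : S) : s * star s * s = s := InverseSemigroup0.mul_star_mul_self s
theorem tst (s : S) : star s * s * star s = star s := InverseSemigroup0.star_mul_self_star s
theorem star_uniq {s t : S} (h1 : s * t * s = s) (h2 : t * s * t = t) : t = star s :=
  InverseSemigroup0.star_unique s t h1 h2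

theorem star_star (s : S) : star (star s) = s := (star_uniq (tst s) (sss s)).symm
theorem star_zero : star (0:S) = 0 :=
  (star_uniq (by rw [zmul, zmul]) (by rw [zmul, zmul])).symm
theorem star_idem {e : S} (he : IsIdempotentElem e) : star e = e :=
  (star_uniq (by rw [he, he]) (by rw [he, he])).symm

theorem idemL {e : S} (he : IsIdempotentElem e) (x : S) : e * (e * x) = e * x := by
  rw [← mul_assoc, he]

theorem sss' (s : S) : s * (star s * s) = s := by rw [← mul_assoc, sss]
theorem tst' (s : S) : star s * (s * star s) = star s := by rw [← mul_assoc, tst]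
theorem sssL (s x : S) : s * (star s * (s * x)) = s * x := by
  rw [← mul_assoc, ← mul_assoc, sss]
theorem tstL (s x : S) : star s * (s * (star s * x)) = star s * x := by
  rw [← mul_assoc, ← mul_assoc, tst]

theorem mul_star_self_idem (s : S) : IsIdempotentElem (s * star s) := by
  show s * star s * (s * star s) = s * star s
  rw [← mul_assoc, sss]
theorem star_self_mul_idem (s : S) : IsIdempotentElem (star s * s) := by
  show star s * s * (star s * s) = star s * s
  rw [← mul_assoc, tst]

theorem prod_idem {e f : S} (he : IsIdempotentElem e) (hf : IsIdempotentElem f) :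
    IsIdempotentElem (e * f) := by
  have hbab : star (e * f) * (e * f) * star (e * f) = star (e * f) := tst _
  have h1 : (e * f) * (f * star (e * f) * e) * (e * f) = e * f := by
    have h : (e * f) * (f * star (e * f) * e) * (e * f)
        = e * (f * (f * (star (e * f) * (e * (e * f))))) := by
      simp only [mul_assoc]
    rw [h, idemL hf, idemL he]
    calc e * (f * (star (e * f) * (e * f)))
        = e * f * star (e * f) * (e * f) := by simp only [mul_assoc]
      _ = e * f := by rw [sss]
  have h2 : (f * star (e * f) * e) * (e * f) * (f * star (e * f) * e)
      = f * star (e * f) * e := by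
    have h : (f * star (e * f) * e) * (e * f) * (f * star (e * f) * e)
        = f * (star (e * f) * (e * (e * (f * (f * (star (e * f) * e)))))) := by
      simp only [mul_assoc]
    rw [h, idemL he, idemL hf]
    calc f * (star (e * f) * (e * (f * (star (e * f) * e))))
        = f * (star (e * f) * (e * f) * star (e * f) * e) := by simp only [mul_assoc]
      _ = f * (star (e * f) * e) := by rw [hbab]
      _ = f * star (e * f) * e := by rw [mul_assoc]
  have hu : f * star (e * f) * e = star (e * f) := star_uniq h1 h2
  have huid : IsIdempotentElem (f * star (e * f) * e) := by
    show f * star (e * f) * e * (f * star (e * f) * e) = f * star (e * f) * e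
    calc f * star (e * f) * e * (f * star (e * f) * e)
        = f * (star (e * f) * (e * f) * star (e * f) * e) := by simp only [mul_assoc]
      _ = f * (star (e * f) * e) := by rw [hbab]
      _ = f * star (e * f) * e := by rw [mul_assoc]
  have hstarid : IsIdempotentElem (star (e * f)) := hu ▸ huid
  have h3 : e * f = star (star (e * f)) := (star_star (e * f)).symm
  rw [h3, star_idem hstarid]
  exact hstarid

theorem idem_comm {e f : S} (he : IsIdempotentElem e) (hf : IsIdempotentElem f) :
    e * f = f * e := by
  have hef := prod_idem he hf
  have hfe := prod_idem hf he
  have h1 : (e * f) * (f * e) * (e * f) = e * f := by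
    have h : (e * f) * (f * e) * (e * f) = e * (f * (f * (e * (e * f)))) := by
      simp only [mul_assoc]
    rw [h, idemL hf, idemL he, ← mul_assoc]
    exact hef
  have h2 : (f * e) * (e * f) * (f * e) = f * e := by
    have h : (f * e) * (e * f) * (f * e) = f * (e * (e * (f * (f * e)))) := by
      simp only [mul_assoc]
    rw [h, idemL he, idemL hf, ← mul_assoc]
    exact hfe
  have h3 : f * e = star (e * f) := star_uniq h1 h2
  rw [h3, star_idem hef]

theorem idem_swapL {e f : S} (he : IsIdempotentElem e) (hf : IsIdempotentElem f) (x : S) :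
    e * (f * x) = f * (e * x) := by
  rw [← mul_assoc, ← mul_assoc, idem_comm he hf]

theorem star_mul (a b : S) : star (a * b) = star b * star a := by
  have h1 : (a * b) * (star b * star a) * (a * b) = a * b := by
    have h := congrArg (· * b) (idem_comm (mul_star_self_idem b) (star_self_mul_idem a))
    simp only [mul_assoc] at h
    calc (a * b) * (star b * star a) * (a * b)
        = a * (b * (star b * (star a * (a * b)))) := by simp only [mul_assoc]
      _ = a * (star a * (a * (b * (star b * b)))) := by rw [h]
      _ = a * (star a * (a * b)) := by rw [sss' b]
      _ = a * b := sssL a b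
  have h2 : (star b * star a) * (a * b) * (star b * star a) = star b * star a := by
    have h := congrArg (· * star a) (idem_comm (star_self_mul_idem a) (mul_star_self_idem b))
    simp only [mul_assoc] at h
    calc (star b * star a) * (a * b) * (star b * star a)
        = star b * (star a * (a * (b * (star b * star a)))) := by simp only [mul_assoc]
      _ = star b * (b * (star b * (star a * (a * star a)))) := by rw [h]
      _ = star b * (star a * (a * star a)) := tstL b _
      _ = star b * star a := by rw [tst' a]
  exact (star_uniq h1 h2).symm

theorem eq_zero_of_mul_star_self {x : S} (h : x * star x = 0) : x = 0 := by
  have h2 := sss x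
  rw [h, zmul] at h2
  exact h2.symm

theorem eq_zero_of_star_self_mul {x : S} (h : star x * x = 0) : x = 0 := by
  have h2 := sss' x
  rw [h, mulz] at h2
  exact h2.symm

theorem natle_idem {f e : S} (hf : IsIdempotentElem f) : NatLe f e ↔ f = e * f := by
  unfold NatLe
  rw [star_idem hf, mul_assoc, hf]

theorem natle_refl {e : S} (he : IsIdempotentElem e) : NatLe e e :=
  (natle_idem he).mpr he.symm

theorem natle_mul_left {f e : S} (hf : IsIdempotentElem f) (h : NatLe f e) : e * f = f :=
  ((natle_idem hf).mp h).symm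

theorem natle_mul_right {f e : S} (hf : IsIdempotentElem f) (he : IsIdempotentElem e)
    (h : NatLe f e) : f * e = f := by
  rw [idem_comm hf he]
  exact natle_mul_left hf h

theorem natle_trans {g f e : S} (hg : IsIdempotentElem g) (hf : IsIdempotentElem f)
    (hgf : NatLe g f) (hfe : NatLe f e) : NatLe g e := by
  rw [natle_idem hg] at hgf ⊢
  rw [natle_idem hf] at hfe
  calc g = f * g := hgf
    _ = e * f * g := by rw [← hfe]
    _ = e * g := by rw [mul_assoc, ← hgf]

theorem natle_of_mul {e : S} (he : IsIdempotentElem e) (h : S) (hh : IsIdempotentElem h) :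
    NatLe (e * h) e := by
  have h2 := prod_idem he hh
  rw [natle_idem h2, ← mul_assoc, he]

theorem thetaid (hdisj : ZeroDisjunctive S) {p v : S} (hp : IsIdempotentElem p)
    (hpv : p * v = v) (hvp : v * p = v) (hkp' : star v * v = p) (hrp' : v * star v = p)
    (stuck' : ∀ g, IsIdempotentElem g → g ≠ 0 → NatLe g p → g * (v * (g * star v)) ≠ 0) :
    ∀ g, IsIdempotentElem g → NatLe g p → star v * (g * v) = g := by
  have hps : p * star v = star v := by
    calc p * star v = star p * star v := by rw [star_idem hp]
      _ = star (v * p) := (star_mul v p).symm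
      _ = star v := by rw [hvp]
  have hsp : star v * p = star v := by
    calc star v * p = star v * star p := by rw [star_idem hp]
      _ = star (p * v) := (star_mul p v).symm
      _ = star v := by rw [hpv]
  have hrL : ∀ x : S, v * (star v * x) = p * x := fun x => by rw [← mul_assoc, hrp']
  have hkL : ∀ x : S, star v * (v * x) = p * x := fun x => by rw [← mul_assoc, hkp']
  have hpsL : ∀ x : S, p * (star v * x) = star v * x := fun x => by rw [← mul_assoc, hps]
  have hpvL : ∀ x : S, p * (v * x) = v * x := fun x => by rw [← mul_assoc, hpv]
  -- θ basic properties
  have thIdem : ∀ q, IsIdempotentElem q → NatLe q p → IsIdempotentElem (star v * (q * v)) := by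
    intro q hq hqp
    have hqpm : q * p = q := natle_mul_right hq hp hqp
    have hqpL : ∀ x : S, q * (p * x) = q * x := fun x => by rw [← mul_assoc, hqpm]
    show star v * (q * v) * (star v * (q * v)) = star v * (q * v)
    calc star v * (q * v) * (star v * (q * v))
        = star v * (q * (v * (star v * (q * v)))) := by simp only [mul_assoc]
      _ = star v * (q * (p * (q * v))) := by rw [hrL]
      _ = star v * (q * (q * v)) := by rw [hqpL]
      _ = star v * (q * v) := by rw [idemL hq]
  have th'Idem : ∀ q, IsIdempotentElem q → NatLe q p → IsIdempotentElem (v * (q * star v)) := by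
    intro q hq hqp
    have hqpm : q * p = q := natle_mul_right hq hp hqp
    have hqpL : ∀ x : S, q * (p * x) = q * x := fun x => by rw [← mul_assoc, hqpm]
    show v * (q * star v) * (v * (q * star v)) = v * (q * star v)
    calc v * (q * star v) * (v * (q * star v))
        = v * (q * (star v * (v * (q * star v)))) := by simp only [mul_assoc]
      _ = v * (q * (p * (q * star v))) := by rw [hkL]
      _ = v * (q * (q * star v)) := by rw [hqpL]
      _ = v * (q * star v) := by rw [idemL hq]
  have thNat : ∀ q, IsIdempotentElem q → NatLe q p → NatLe (star v * (q * v)) p := by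
    intro q hq hqp
    rw [natle_idem (thIdem q hq hqp), hpsL]
  have th'Nat : ∀ q, IsIdempotentElem q → NatLe q p → NatLe (v * (q * star v)) p := by
    intro q hq hqp
    rw [natle_idem (th'Idem q hq hqp), hpvL]
  have th'th : ∀ q, IsIdempotentElem q → NatLe q p → v * ((star v * (q * v)) * star v) = q := by
    intro q hq hqp
    have hqpm : q * p = q := natle_mul_right hq hp hqp
    calc v * ((star v * (q * v)) * star v)
        = v * (star v * (q * (v * star v))) := by simp only [mul_assoc]
      _ = v * (star v * (q * p)) := by rw [hrp']
      _ = v * (star v * q) := by rw [hqpm]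
      _ = p * q := hrL q
      _ = q := natle_mul_left hq hqp
  have thMono : ∀ r q, IsIdempotentElem r → IsIdempotentElem q → NatLe r p → NatLe q r →
      (star v * (r * v)) * (star v * (q * v)) = star v * (q * v) := by
    intro r q hr hq hrp hqr
    have hrpm : r * p = r := natle_mul_right hr hp hrp
    have hrpL : ∀ x : S, r * (p * x) = r * x := fun x => by rw [← mul_assoc, hrpm]
    have hrq : r * q = q := natle_mul_left hq hqr
    have hrqL : ∀ x : S, r * (q * x) = q * x := fun x => by rw [← mul_assoc, hrq]
    calc (star v * (r * v)) * (star v * (q * v))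
        = star v * (r * (v * (star v * (q * v)))) := by simp only [mul_assoc]
      _ = star v * (r * (p * (q * v))) := by rw [hrL]
      _ = star v * (r * (q * v)) := by rw [hrpL]
      _ = star v * (q * v) := by rw [hrqL]
  have th'Mono : ∀ r q, IsIdempotentElem r → IsIdempotentElem q → NatLe r p → NatLe q r →
      (v * (r * star v)) * (v * (q * star v)) = v * (q * star v) := by
    intro r q hr hq hrp hqr
    have hrpm : r * p = r := natle_mul_right hr hp hrp
    have hrpL : ∀ x : S, r * (p * x) = r * x := fun x => by rw [← mul_assoc, hrpm]
    have hrq : r * q = q := natle_mul_left hq hqr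
    have hrqL : ∀ x : S, r * (q * x) = q * x := fun x => by rw [← mul_assoc, hrq]
    calc (v * (r * star v)) * (v * (q * star v))
        = v * (r * (star v * (v * (q * star v)))) := by simp only [mul_assoc]
      _ = v * (r * (p * (q * star v))) := by rw [hkL]
      _ = v * (r * (q * star v)) := by rw [hrpL]
      _ = v * (q * star v) := by rw [hrqL]
  -- stuck for θ
  have stuck : ∀ q, IsIdempotentElem q → q ≠ 0 → NatLe q p → q * (star v * (q * v)) ≠ 0 := by
    intro q hq hq0 hqp hcontra
    have hqpm : q * p = q := natle_mul_right hq hp hqp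
    have e1 : v * ((q * (star v * (q * v))) * star v) = (v * (q * star v)) * q := by
      calc v * ((q * (star v * (q * v))) * star v)
          = v * (q * (star v * (q * (v * star v)))) := by simp only [mul_assoc]
        _ = v * (q * (star v * (q * p))) := by rw [hrp']
        _ = v * (q * (star v * q)) := by rw [hqpm]
        _ = (v * (q * star v)) * q := by simp only [mul_assoc]
    have e2 : v * ((q * (star v * (q * v))) * star v) = 0 := by
      rw [hcontra, zmul, mulz]
    have e3 : (v * (q * star v)) * q = 0 := by rw [← e1, e2]
    have e4 : q * (v * (q * star v)) = 0 := by
      rw [idem_comm hq (th'Idem q hq hqp), e3]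
    exact stuck' q hq hq0 hqp e4
  -- main argument
  intro g hg hgp
  by_cases hg0 : g = 0
  · subst hg0
    rw [zmul, mulz]
  by_contra hne
  have hGidem := thIdem g hg hgp
  have hGp := thNat g hg hgp
  have hgG_idem : IsIdempotentElem (g * (star v * (g * v))) := prod_idem hg hGidem
  have hh0 : g * (star v * (g * v)) ≠ 0 := stuck g hg hg0 hgp
  by_cases hcase : g * (star v * (g * v)) = g
  · -- g strictly below θ g
    have hgG : NatLe g (star v * (g * v)) := by
      rw [natle_idem hg, idem_comm hGidem hg]
      exact hcase.symm
    have hneG : g ≠ star v * (g * v) := fun h => hne h.symm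
    obtain ⟨q, hq0, hqI, hqG, hgq⟩ := hdisj _ _ hGidem hg hg0 hgG hneG
    have hqp : NatLe q p := natle_trans hqI hGidem hqG hGp
    have hth'G : v * ((star v * (g * v)) * star v) = g := th'th g hg hgp
    have hmono : (v * ((star v * (g * v)) * star v)) * (v * (q * star v)) = v * (q * star v) :=
      th'Mono _ q hGidem hqI hGp hqG
    rw [hth'G] at hmono
    have hz : q * (v * (q * star v)) = 0 := by
      calc q * (v * (q * star v)) = q * (g * (v * (q * star v))) := by rw [hmono]
        _ = (q * g) * (v * (q * star v)) := (mul_assoc _ _ _).symm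
        _ = (g * q) * (v * (q * star v)) := by rw [idem_comm hqI hg]
        _ = 0 := by rw [hgq, zmul]
    exact stuck' q hqI hq0 hqp hz
  · -- h := g * θ g with 0 ≠ h < g
    have hhg : NatLe (g * (star v * (g * v))) g := natle_of_mul hg _ hGidem
    obtain ⟨q, hq0, hqI, hqg, hhq⟩ := hdisj g _ hg hgG_idem hh0 hhg hcase
    have hqp : NatLe q p := natle_trans hqI hg hqg hgp
    have hmono : (star v * (g * v)) * (star v * (q * v)) = star v * (q * v) :=
      thMono g q hg hqI hgp hqg
    have hqth : q * (star v * (g * v)) = 0 := by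
      have hqg' : q * g = q := natle_mul_right hqI hg hqg
      calc q * (star v * (g * v)) = (q * g) * (star v * (g * v)) := by rw [hqg']
        _ = q * (g * (star v * (g * v))) := by rw [mul_assoc]
        _ = (g * (star v * (g * v))) * q := idem_comm hqI hgG_idem
        _ = 0 := hhq
    have hz : q * (star v * (q * v)) = 0 := by
      calc q * (star v * (q * v))
          = q * ((star v * (g * v)) * (star v * (q * v))) := by rw [hmono]
        _ = (q * (star v * (g * v))) * (star v * (q * v)) := (mul_assoc _ _ _).symm
        _ = 0 := by rw [hqth, zmul]
    exact stuck q hqI hq0 hqp hz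

theorem kill (hqf : QuasiFundamental S) (hdisj : ZeroDisjunctive S)
    {p v : S} (hp : IsIdempotentElem p) (hv0 : v ≠ 0)
    (hpv : p * v = v) (hvp : v * p = v) :
    (∃ g, IsIdempotentElem g ∧ g ≠ 0 ∧ NatLe g p ∧ g * v * g = 0) ∨
    (∃ e', IsIdempotentElem e' ∧ e' ≠ 0 ∧ NatLe e' p ∧ v * e' = e' ∧
      star v * v = p ∧ v * star v = p) := by
  have hps : p * star v = star v := by
    calc p * star v = star p * star v := by rw [star_idem hp]
      _ = star (v * p) := (star_mul v p).symm
      _ = star v := by rw [hvp]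
  have hkI : IsIdempotentElem (star v * v) := star_self_mul_idem v
  have hrI : IsIdempotentElem (v * star v) := mul_star_self_idem v
  have hkp : NatLe (star v * v) p := by
    rw [natle_idem hkI, ← mul_assoc, hps]
  have hrp : NatLe (v * star v) p := by
    rw [natle_idem hrI, ← mul_assoc, hpv]
  have hk0 : star v * v ≠ 0 := fun h => hv0 (eq_zero_of_star_self_mul h)
  have hr0 : v * star v ≠ 0 := fun h => hv0 (eq_zero_of_mul_star_self h)
  by_cases hkp' : star v * v = p
  · by_cases hrp' : v * star v = p
    · by_cases hstuck : ∃ g, IsIdempotentElem g ∧ g ≠ 0 ∧ NatLe g p ∧ g * (v * (g * star v)) = 0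
      · obtain ⟨g, hgI, hg0, hgp, hgz⟩ := hstuck
        left
        refine ⟨g, hgI, hg0, hgp, ?_⟩
        apply eq_zero_of_mul_star_self
        have hstareq : star (g * v * g) = g * (star v * g) := by
          rw [star_mul, star_mul, star_idem hgI]
        rw [hstareq]
        calc g * v * g * (g * (star v * g))
            = g * (v * (g * (g * (star v * g)))) := by simp only [mul_assoc]
          _ = g * (v * (g * (star v * g))) := by rw [idemL hgI]
          _ = (g * (v * (g * star v))) * g := by simp only [mul_assoc]
          _ = 0 := by rw [hgz, zmul]
      · push_neg at hstuck
        have hid := thetaid hdisj hp hpv hvp hkp' hrp' hstuck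
        have hcomm : ∀ g, IsIdempotentElem g → NatLe g p → v * g = g * v := by
          intro g hg hgp
          calc v * g = v * (star v * (g * v)) := by rw [hid g hg hgp]
            _ = (v * star v) * (g * v) := by rw [← mul_assoc]
            _ = p * (g * v) := by rw [hrp']
            _ = (p * g) * v := by rw [← mul_assoc]
            _ = g * v := by rw [natle_mul_left hg hgp]
        have hcentral : ∀ h, IsIdempotentElem h → v * h = h * v := by
          intro h hh
          have hphI : IsIdempotentElem (p * h) := prod_idem hp hh
          have hphp : NatLe (p * h) p := natle_of_mul hp h hh
          calc v * h = (v * p) * h := by rw [hvp]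
            _ = v * (p * h) := by rw [mul_assoc]
            _ = (p * h) * v := hcomm _ hphI hphp
            _ = (h * p) * v := by rw [idem_comm hp hh]
            _ = h * (p * v) := by rw [mul_assoc]
            _ = h * v := by rw [hpv]
        obtain ⟨e', he'0, he'I, he'v⟩ := hqf v hv0 hcentral
        have hve' : v * e' = e' := by
          have h2 : e' = v * star e' * e' := he'v
          rw [star_idem he'I, mul_assoc, he'I] at h2
          exact h2.symm
        have he'sv : e' * star v = e' := by
          have h1 : (star e' : S) = star e' * star v := by
            conv_lhs => rw [← hve', star_mul]
          rw [star_idem he'I] at h1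
          exact h1.symm
        have he'p : NatLe e' p := by
          have h2 : e' * v = e' := by rw [← hcentral e' he'I, hve']
          have h3 : e' * p = e' := by
            calc e' * p = e' * (star v * v) := by rw [hkp']
              _ = (e' * star v) * v := by rw [← mul_assoc]
              _ = e' * v := by rw [he'sv]
              _ = e' := h2
          rw [natle_idem he'I]
          calc e' = e' * p := h3.symm
            _ = p * e' := idem_comm he'I hp
        right
        exact ⟨e', he'I, he'0, he'p, hve', hkp', hrp'⟩
    · obtain ⟨g, hg0, hgI, hgp, hrg⟩ := hdisj p (v * star v) hp hrI hr0 hrp hrp'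
      left
      refine ⟨g, hgI, hg0, hgp, ?_⟩
      have hgv : g * v = 0 := by
        apply eq_zero_of_mul_star_self
        rw [star_mul, star_idem hgI]
        calc g * v * (star v * g) = g * ((v * star v) * g) := by simp only [mul_assoc]
          _ = 0 := by rw [hrg, mulz]
      rw [hgv, zmul]
  · obtain ⟨g, hg0, hgI, hgp, hkg⟩ := hdisj p (star v * v) hp hkI hk0 hkp hkp'
    left
    refine ⟨g, hgI, hg0, hgp, ?_⟩
    have hvg : v * g = 0 := by
      apply eq_zero_of_star_self_mul
      rw [star_mul, star_idem hgI]
      calc g * star v * (v * g) = g * ((star v * v) * g) := by simp only [mul_assoc]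
        _ = 0 := by rw [hkg, mulz]
    rw [mul_assoc, hvg, mulz]


theorem sandwich_absorb {A B : S} (hA : IsIdempotentElem A) (hB : IsIdempotentElem B)
    (h : A * (B * A) = A) : A * B = A := by
  calc A * B = (A * A) * B := by rw [hA]
    _ = A * (A * B) := mul_assoc _ _ _
    _ = A * (B * A) := by rw [idem_comm hA hB]
    _ = A := h

end SG

namespace KA


theorem single_zero_mul_apply (k : K) (g : MonoidAlgebra K S) {s : S} (hs : s ≠ 0) :
    (MonoidAlgebra.single (0:S) k * g).coeff s = 0 := by
  classical
  exact MonoidAlgebra.coeff_single_mul_of_forall_mul_ne _ _ (fun d => by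
    rw [SG.zmul]; exact Ne.symm hs)

theorem mul_single_zero_apply (g : MonoidAlgebra K S) (k : K) {s : S} (hs : s ≠ 0) :
    (g * MonoidAlgebra.single (0:S) k).coeff s = 0 := by
  classical
  exact MonoidAlgebra.coeff_mul_single_of_forall_mul_ne _ _ (fun d => by
    rw [SG.mulz]; exact Ne.symm hs)

theorem sub_eq_single_zero {a b : MonoidAlgebra K S} (h : ∀ s : S, s ≠ 0 → a.coeff s = b.coeff s) :
    a - b = MonoidAlgebra.single (0:S) ((a - b).coeff 0) := by
  classical
  ext t
  by_cases ht : t = 0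
  · subst ht; simp
  · rw [MonoidAlgebra.coeff_sub, Finsupp.sub_apply, h t ht, sub_self, MonoidAlgebra.coeff_single,
      Finsupp.single_apply, if_neg (Ne.symm ht)]

noncomputable def offZero : RingCon (MonoidAlgebra K S) where
  r a b := ∀ s : S, s ≠ 0 → a.coeff s = b.coeff s
  iseqv := ⟨fun _ _ _ => rfl, fun h s hs => (h s hs).symm, fun h h' s hs => (h s hs).trans (h' s hs)⟩
  add' := fun h h' s hs => by
    rw [MonoidAlgebra.coeff_add, MonoidAlgebra.coeff_add, Finsupp.add_apply, Finsupp.add_apply,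
      h s hs, h' s hs]
  mul' := by
    intro w x y z h h' s hs
    have e1 : w * y - x * z = (w - x) * y + x * (y - z) := by
      rw [sub_mul, mul_sub]; abel
    have h1 := sub_eq_single_zero h
    have h2 := sub_eq_single_zero h'
    have hz : (w * y - x * z).coeff s = 0 := by
      rw [e1, MonoidAlgebra.coeff_add, Finsupp.add_apply, h1, h2, single_zero_mul_apply _ _ hs,
        mul_single_zero_apply _ _ hs, add_zero]
    rw [MonoidAlgebra.coeff_sub, Finsupp.sub_apply] at hz
    exact sub_eq_zero.mp hz

theorem con_le_offZero : contractedCon K S ≤ offZero := by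
  classical
  apply RingCon.ringConGen_le.mpr
  rintro a b ⟨rfl, rfl⟩ s hs
  rw [MonoidAlgebra.coeff_single, Finsupp.single_apply, if_neg (Ne.symm hs)]
  rfl

theorem mk0_eq_iff {a b : MonoidAlgebra K S} :
    mk0 K S a = mk0 K S b ↔ ∀ s : S, s ≠ 0 → a.coeff s = b.coeff s := by
  constructor
  · intro h
    exact con_le_offZero ((RingCon.eq _).mp h)
  · intro h
    have hsingle : ∀ k : K, (contractedCon K S) (MonoidAlgebra.single (0:S) k) 0 := by
      intro k
      have base : (contractedCon K S) (MonoidAlgebra.single (0:S) (1:K)) 0 :=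
        RingConGen.Rel.of _ _ ⟨rfl, rfl⟩
      have h2 := (contractedCon K S).mul ((contractedCon K S).refl (MonoidAlgebra.single (0:S) k)) base
      rwa [MonoidAlgebra.single_mul_single, SG.mulz, mul_one, mul_zero] at h2
    have key : a = b + MonoidAlgebra.single (0:S) ((a - b).coeff 0) := by
      rw [← sub_eq_single_zero h]; abel
    have h3 : (contractedCon K S) (b + MonoidAlgebra.single (0:S) ((a-b).coeff 0)) b := by
      have h4 := (contractedCon K S).add ((contractedCon K S).refl b) (hsingle ((a-b).coeff 0))
      rwa [add_zero] at h4
    rw [key]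
    exact (RingCon.eq _).mpr h3

noncomputable def rep (x : Kzero K S) : MonoidAlgebra K S :=
  Quotient.liftOn x (fun a => a - MonoidAlgebra.single (0:S) (a.coeff 0)) (by
    intro a b hab
    have h : ∀ s : S, s ≠ 0 → a.coeff s = b.coeff s := con_le_offZero hab
    classical
    ext t
    by_cases ht : t = 0
    · subst ht
      rw [MonoidAlgebra.coeff_sub, MonoidAlgebra.coeff_sub, Finsupp.sub_apply, Finsupp.sub_apply,
        MonoidAlgebra.coeff_single, MonoidAlgebra.coeff_single, Finsupp.single_eq_same,
        Finsupp.single_eq_same, sub_self, sub_self]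
    · rw [MonoidAlgebra.coeff_sub, MonoidAlgebra.coeff_sub, Finsupp.sub_apply, Finsupp.sub_apply,
        h t ht, MonoidAlgebra.coeff_single, MonoidAlgebra.coeff_single,
        Finsupp.single_apply, Finsupp.single_apply, if_neg (Ne.symm ht), if_neg (Ne.symm ht)])

theorem rep_mk0 (a : MonoidAlgebra K S) :
    rep (mk0 K S a) = a - MonoidAlgebra.single (0:S) (a.coeff 0) := rfl

theorem rep_apply_zero (x : Kzero K S) : (rep x).coeff (0:S) = 0 := by
  induction x using Quotient.ind with
  | _ a =>
    show (a - MonoidAlgebra.single (0:S) (a.coeff 0)).coeff 0 = 0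
    rw [MonoidAlgebra.coeff_sub, Finsupp.sub_apply, MonoidAlgebra.coeff_single,
      Finsupp.single_eq_same, sub_self]

theorem mk0_rep (x : Kzero K S) : mk0 K S (rep x) = x := by
  classical
  induction x using Quotient.ind with
  | _ a =>
    show mk0 K S (a - MonoidAlgebra.single (0:S) (a.coeff 0)) = mk0 K S a
    apply mk0_eq_iff.mpr
    intro s hs
    rw [MonoidAlgebra.coeff_sub, Finsupp.sub_apply, MonoidAlgebra.coeff_single,
      Finsupp.single_apply, if_neg (Ne.symm hs), sub_zero]

theorem rep_of {a : MonoidAlgebra K S} (h : a.coeff 0 = 0) : rep (mk0 K S a) = a := by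
  rw [rep_mk0, h, MonoidAlgebra.single_zero, sub_zero]

theorem rep_zero : rep (0 : Kzero K S) = 0 := by
  have : (0 : Kzero K S) = mk0 K S 0 := rfl
  rw [this, rep_of rfl]

theorem rep_eq_zero_iff {x : Kzero K S} : rep x = 0 ↔ x = 0 := by
  constructor
  · intro h
    rw [← mk0_rep x, h]
    rfl
  · intro h; rw [h, rep_zero]

noncomputable def sing (s : S) (k : K) : Kzero K S := mk0 K S (MonoidAlgebra.single s k)

theorem iota_eq_sing (s : S) : iota K S s = sing s 1 := rfl

theorem mk0_mul (a b : MonoidAlgebra K S) : mk0 K S (a * b) = mk0 K S a * mk0 K S b := rfl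

theorem sing_mul_sing (s t : S) (k l : K) : sing s k * sing t l = sing (s*t) (k*l) := by
  rw [sing, sing, ← mk0_mul, MonoidAlgebra.single_mul_single]
  rfl

theorem sing_zero_left (k : K) : sing (0:S) k = 0 := by
  classical
  show mk0 K S _ = mk0 K S 0
  apply mk0_eq_iff.mpr
  intro s hs
  rw [MonoidAlgebra.coeff_single, Finsupp.single_apply, if_neg (Ne.symm hs)]
  rfl

theorem sing_k_zero (s : S) : sing s (0:K) = 0 := by
  rw [sing, MonoidAlgebra.single_zero]
  rfl

theorem iota_mul_iota (s t : S) : iota K S s * iota K S t = iota K S (s * t) := by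
  rw [iota_eq_sing, iota_eq_sing, iota_eq_sing, sing_mul_sing, mul_one]

theorem iota_zero : iota K S (0:S) = 0 := by
  rw [iota_eq_sing]; exact sing_zero_left 1

theorem rep_sing {s : S} (hs : s ≠ 0) (k : K) :
    rep (sing s k) = MonoidAlgebra.single s k :=
  rep_of (by classical rw [MonoidAlgebra.coeff_single, Finsupp.single_apply, if_neg hs])

theorem sing_ne_zero {s : S} (hs : s ≠ 0) {k : K} (hk : k ≠ 0) : sing s k ≠ 0 := by
  intro h
  have h2 : rep (sing s k) = 0 := rep_eq_zero_iff.mpr h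
  rw [rep_sing hs] at h2
  have := congrArg (fun f => f.coeff s) h2
  simp only [MonoidAlgebra.coeff_single, Finsupp.single_eq_same, MonoidAlgebra.coeff_zero,
    Finsupp.coe_zero, Pi.zero_apply] at this
  exact hk this

noncomputable def Supp (x : Kzero K S) : Finset S := (rep x).coeff.support

theorem mem_Supp_iff {x : Kzero K S} {s : S} : s ∈ Supp x ↔ (rep x).coeff s ≠ 0 :=
  Finsupp.mem_support_iff

theorem ne_zero_of_mem_Supp {x : Kzero K S} {s : S} (h : s ∈ Supp x) : s ≠ 0 := by
  intro h0
  subst h0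
  exact (mem_Supp_iff.mp h) (rep_apply_zero x)

theorem Supp_nonempty_of_ne {x : Kzero K S} (h : x ≠ 0) : (Supp x).Nonempty := by
  rw [Finset.nonempty_iff_ne_empty]
  intro he
  exact h (rep_eq_zero_iff.mp (MonoidAlgebra.coeff_eq_zero.mp (Finsupp.support_eq_empty.mp he)))

theorem mul_iota_rep [DecidableEq S] (x : Kzero K S) (g : S) {s : S} (hs : s ≠ 0) :
    (rep (x * iota K S g)).coeff s = ∑ u ∈ Supp x, (if u * g = s then (rep x).coeff u else 0) := by
  classical
  have hx : x * iota K S g = mk0 K S (rep x * MonoidAlgebra.single g 1) := by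
    conv_lhs => rw [← mk0_rep x]
    rfl
  rw [hx]
  have h0 : (rep (mk0 K S (rep x * MonoidAlgebra.single g 1))).coeff s
      = ((rep x * MonoidAlgebra.single g 1 : MonoidAlgebra K S)).coeff s := by
    classical
    rw [rep_mk0, MonoidAlgebra.coeff_sub, Finsupp.sub_apply, MonoidAlgebra.coeff_single,
      Finsupp.single_apply, if_neg (Ne.symm hs), sub_zero]
  rw [h0, MonoidAlgebra.mul_apply]
  apply Finset.sum_congr rfl
  intro u _
  show Finsupp.sum (Finsupp.single g (1:K))
      (fun a₂ b₂ => if u * a₂ = s then (rep x).coeff u * b₂ else 0) = _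
  rw [Finsupp.sum_single_index (by simp)]
  simp only [mul_one]

noncomputable def mk0Hom : MonoidAlgebra K S →+ Kzero K S :=
  AddMonoidHom.mk' (mk0 K S) (fun _ _ => rfl)

theorem decomp (x : Kzero K S) : x = ∑ t ∈ Supp x, sing t ((rep x).coeff t) := by
  have h : rep x = ∑ t ∈ Supp x, MonoidAlgebra.single t ((rep x).coeff t) := by
    conv_lhs => rw [← MonoidAlgebra.sum_coeff_single (rep x)]
    rfl
  conv_lhs => rw [← mk0_rep x, h]
  exact map_sum mk0Hom (fun t => MonoidAlgebra.single t ((rep x).coeff t)) (Supp x)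

theorem key [DecidableEq S] {x c : Kzero K S} {g : S} (hc : c = x * iota K S g)
    (hcard : (Supp x).card ≤ (Supp c).card) :
    (Supp c = (Supp x).image (· * g)) ∧
    (∀ u ∈ Supp x, u * g ≠ 0) ∧
    (∀ u ∈ Supp x, ∀ v ∈ Supp x, u * g = v * g → u = v) ∧
    (∀ u ∈ Supp x, (rep c).coeff (u * g) = (rep x).coeff u) := by
  classical
  have hsub : Supp c ⊆ (Supp x).image (· * g) := by
    intro s hsmem
    have hs0 : s ≠ 0 := ne_zero_of_mem_Supp hsmem
    have hne : (rep c).coeff s ≠ 0 := mem_Supp_iff.mp hsmem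
    rw [hc, mul_iota_rep x g hs0] at hne
    obtain ⟨u, hu, hne2⟩ := Finset.exists_ne_zero_of_sum_ne_zero hne
    have heq : u * g = s := by
      by_contra hx
      rw [if_neg hx] at hne2
      exact hne2 rfl
    exact Finset.mem_image.mpr ⟨u, hu, heq⟩
  have hcard2 : ((Supp x).image (· * g)).card ≤ (Supp x).card := Finset.card_image_le
  have heq : Supp c = (Supp x).image (· * g) :=
    Finset.eq_of_subset_of_card_le hsub (le_trans hcard2 hcard)
  have hinj : Set.InjOn (· * g) (Supp x : Set S) := by
    apply Finset.injOn_of_card_image_eq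
    exact le_antisymm hcard2 (heq ▸ hcard)
  have hinj' : ∀ u ∈ Supp x, ∀ v ∈ Supp x, u * g = v * g → u = v := fun u hu v hv h =>
    hinj (Finset.mem_coe.mpr hu) (Finset.mem_coe.mpr hv) h
  have hne0 : ∀ u ∈ Supp x, u * g ≠ 0 := by
    intro u hu
    have : u * g ∈ Supp c := by
      rw [heq]; exact Finset.mem_image_of_mem _ hu
    exact ne_zero_of_mem_Supp this
  refine ⟨heq, hne0, hinj', ?_⟩
  intro u hu
  rw [hc, mul_iota_rep x g (hne0 u hu)]
  rw [Finset.sum_eq_single u]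
  · rw [if_pos rfl]
  · intro v hv hvu
    rw [if_neg (fun h => hvu (hinj' v hv u hu h))]
  · intro h; exact absurd hu h


end KA

end Aux

/-- Uniqueness theorem: for a quasi-fundamental inverse semigroup with zero whose
semilattice of idempotents is 0-disjunctive, a field `K`, and an ideal `J` of `K₀S`,
the following are equivalent: (1) `J ∩ S = {0}`; (2) `J ∩ E(S) = {0}`;
(3) `J` is contained in the singular ideal. -/
theorem stmt12 {K S : Type*} [Field K] [InverseSemigroup0 S]
    (hqf : QuasiFundamental S) (hdisj : ZeroDisjunctive S)
    (J : Set (Kzero K S)) (hJ : IsIdealSet K S J) :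
    List.TFAE
      [∀ s : S, iota K S s ∈ J → s = 0,
       ∀ e : S, IsIdempotentElem e → iota K S e ∈ J → e = 0,
       J ⊆ {x : Kzero K S | Singular K S x}] := by
  classical
  obtain ⟨hJ0, hJadd, hJneg, hJmul⟩ := hJ
  tfae_have 1 → 2 := by
    intro h1 e _ he
    exact h1 e he
  tfae_have 3 → 1 := by
    intro h3 s hs
    by_contra hs0
    obtain ⟨f, hfI, hf0, hfle, hzero⟩ := h3 hs (star s * s) (SG.star_self_mul_idem s)
      (fun h => hs0 (SG.eq_zero_of_star_self_mul h))
    rw [KA.iota_mul_iota] at hzero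
    have hsf : s * f = 0 := by
      by_contra hne
      apply KA.sing_ne_zero hne (one_ne_zero (α := K))
      rw [← KA.iota_eq_sing]
      exact hzero
    have h4 : (star s * s) * f = 0 := by rw [mul_assoc, hsf, SG.mulz]
    have h5 : f = 0 := by
      have h6 := SG.natle_mul_left hfI hfle
      rw [h4] at h6
      exact h6.symm
    exact hf0 h5
  tfae_have 2 → 3 := by
    intro h2 x hx
    simp only [Set.mem_setOf_eq, Singular]
    intro e he he0
    by_contra hno
    push_neg at hno
    -- hno : ∀ f, IsIdempotentElem f → f ≠ 0 → NatLe f e → x * iota K S f ≠ 0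
    -- choose a minimizing idempotent f
    have hAne : {m | ∃ g, IsIdempotentElem g ∧ g ≠ 0 ∧ NatLe g e ∧
        (KA.Supp (x * iota K S g)).card = m}.Nonempty :=
      ⟨(KA.Supp (x * iota K S e)).card, e, he, he0, SG.natle_refl he, rfl⟩
    obtain ⟨f, hfI, hf0, hfe, hfN⟩ := Nat.sInf_mem hAne
    have hmin : ∀ g, IsIdempotentElem g → g ≠ 0 → NatLe g e →
        (KA.Supp (x * iota K S f)).card ≤ (KA.Supp (x * iota K S g)).card := by
      intro g hg hg0 hge
      rw [hfN]
      exact Nat.sInf_le ⟨g, hg, hg0, hge, rfl⟩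
    have goodE : ∀ g, IsIdempotentElem g → g ≠ 0 → NatLe g f → NatLe g e :=
      fun g hg _ hgf => SG.natle_trans hg hfI hgf hfe
    have htrans : ∀ g' g : S, IsIdempotentElem g → NatLe g g' →
        (x * iota K S g') * iota K S g = x * iota K S g := by
      intro g' g hg hgg'
      rw [mul_assoc, KA.iota_mul_iota, SG.natle_mul_left hg hgg']
    have hkeyF : ∀ g, IsIdempotentElem g → g ≠ 0 → NatLe g f →
        (KA.Supp (x * iota K S g) = (KA.Supp (x * iota K S f)).image (· * g)) ∧
        (∀ u ∈ KA.Supp (x * iota K S f), u * g ≠ 0) ∧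
        (∀ u ∈ KA.Supp (x * iota K S f), ∀ w ∈ KA.Supp (x * iota K S f),
          u * g = w * g → u = w) ∧
        (∀ u ∈ KA.Supp (x * iota K S f),
          (KA.rep (x * iota K S g)).coeff (u * g) = (KA.rep (x * iota K S f)).coeff u) := by
      intro g hg hg0 hgf
      exact KA.key (htrans f g hg hgf).symm (hmin g hg hg0 (goodE g hg hg0 hgf))
    have hcardEq : ∀ g, IsIdempotentElem g → g ≠ 0 → NatLe g f →
        (KA.Supp (x * iota K S g)).card = (KA.Supp (x * iota K S f)).card := by
      intro g hg hg0 hgf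
      obtain ⟨himg, _, hinj, _⟩ := hkeyF g hg hg0 hgf
      rw [himg]
      exact Finset.card_image_of_injOn (fun a ha b hb hab => hinj a ha b hb hab)
    have hkeyGH : ∀ g h : S, IsIdempotentElem g → g ≠ 0 → NatLe g f →
        IsIdempotentElem h → h ≠ 0 → NatLe h f → NatLe h g →
        (KA.Supp (x * iota K S h) = (KA.Supp (x * iota K S g)).image (· * h)) ∧
        (∀ u ∈ KA.Supp (x * iota K S g), u * h ≠ 0) ∧
        (∀ u ∈ KA.Supp (x * iota K S g), ∀ w ∈ KA.Supp (x * iota K S g),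
          u * h = w * h → u = w) ∧
        (∀ u ∈ KA.Supp (x * iota K S g),
          (KA.rep (x * iota K S h)).coeff (u * h) = (KA.rep (x * iota K S g)).coeff u) := by
      intro g h hg hg0 hgf hh hh0 hhf hhg
      apply KA.key (htrans g h hh hhg).symm
      rw [hcardEq g hg hg0 hgf]
      exact hmin h hh hh0 (goodE h hh hh0 hhf)
    have hfix : ∀ g, IsIdempotentElem g → g ≠ 0 → NatLe g f →
        ∀ u ∈ KA.Supp (x * iota K S g), u * g = u ∧ star u * u = g := by
      intro g hg hg0 hgf u hu
      obtain ⟨himg, hne0, hinj, hcoef⟩ :=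
        hkeyGH g g hg hg0 hgf hg hg0 hgf (SG.natle_refl hg)
      have hug : u * g = u := by
        have hu' : u * g ∈ KA.Supp (x * iota K S g) := by
          rw [himg]
          exact Finset.mem_image_of_mem _ hu
        exact (hinj u hu (u * g) hu' (by rw [mul_assoc, hg])).symm
      refine ⟨hug, ?_⟩
      have hu0 : u ≠ 0 := KA.ne_zero_of_mem_Supp hu
      have hkuI : IsIdempotentElem (star u * u) := SG.star_self_mul_idem u
      have hku0 : star u * u ≠ 0 := fun h => hu0 (SG.eq_zero_of_star_self_mul h)
      have hstaru : star u = g * star u := by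
        conv_lhs => rw [← hug, SG.star_mul, SG.star_idem hg]
      have hkug : NatLe (star u * u) g := by
        rw [SG.natle_idem hkuI]
        conv_lhs => rw [hstaru, mul_assoc]
      by_contra hne
      obtain ⟨h, hh0, hhI, hhg, hkh⟩ := hdisj g (star u * u) hg hkuI hku0 hkug hne
      have hhf : NatLe h f := SG.natle_trans hhI hg hhg hgf
      obtain ⟨_, hne0', _, _⟩ := hkeyGH g h hg hg0 hgf hhI hh0 hhf hhg
      apply hne0' u hu
      calc u * h = (u * (star u * u)) * h := by rw [SG.sss' u]
        _ = u * ((star u * u) * h) := mul_assoc _ _ _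
        _ = 0 := by rw [hkh, SG.mulz]
    -- pick a support element
    have hbne : x * iota K S f ≠ 0 := hno f hfI hf0 hfe
    obtain ⟨t₀, ht₀⟩ := KA.Supp_nonempty_of_ne hbne
    -- build the idempotent p killing the tail
    have hind : ∀ V : Finset S, ∃ p, IsIdempotentElem p ∧ p ≠ 0 ∧ NatLe p f ∧
        ∀ t ∈ V, t ∈ KA.Supp (x * iota K S f) → t ≠ t₀ → p * (star t₀ * t) * p = 0 := by
      intro V
      induction V using Finset.induction_on with
      | empty =>
        exact ⟨f, hfI, hf0, SG.natle_refl hfI,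
          fun t ht => absurd ht (Finset.notMem_empty t)⟩
      | @insert t V htV ih =>
        obtain ⟨p, hpI, hp0, hpf, hpkill⟩ := ih
        by_cases hcases : t ∈ KA.Supp (x * iota K S f) ∧ t ≠ t₀
        case neg =>
          refine ⟨p, hpI, hp0, hpf, ?_⟩
          intro t' ht' htT htne
          rcases Finset.mem_insert.mp ht' with h | h
          · subst h
            exact absurd ⟨htT, htne⟩ hcases
          · exact hpkill t' h htT htne
        case pos =>
          obtain ⟨htT, htne⟩ := hcases
          by_cases hvz : p * (star t₀ * t) * p = 0
          · refine ⟨p, hpI, hp0, hpf, ?_⟩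
            intro t' ht' htT' htne'
            rcases Finset.mem_insert.mp ht' with h | h
            · subst h
              exact hvz
            · exact hpkill t' h htT' htne'
          · have hppv : p * (p * (star t₀ * t) * p) = p * (star t₀ * t) * p := by
              calc p * (p * (star t₀ * t) * p)
                  = (p * p) * ((star t₀ * t) * p) := by simp only [mul_assoc]
                _ = p * ((star t₀ * t) * p) := by rw [hpI]
                _ = p * (star t₀ * t) * p := by rw [← mul_assoc]
            have hpvp : (p * (star t₀ * t) * p) * p = p * (star t₀ * t) * p := by
              calc (p * (star t₀ * t) * p) * p
                  = p * (star t₀ * t) * (p * p) := by simp only [mul_assoc]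
                _ = p * (star t₀ * t) * p := by rw [hpI]
            rcases SG.kill hqf hdisj hpI hvz hppv hpvp with
              ⟨g, hgI, hg0, hgp, hgvg⟩ | ⟨e', he'I, he'0, he'p, hve', hkv, hrv⟩
            · have hgf : NatLe g f := SG.natle_trans hgI hpI hgp hpf
              have hgpm : g * p = g := SG.natle_mul_right hgI hpI hgp
              have hpgm : p * g = g := SG.natle_mul_left hgI hgp
              refine ⟨g, hgI, hg0, hgf, ?_⟩
              intro t' ht' htT' htne'
              rcases Finset.mem_insert.mp ht' with h | h
              · subst h
                calc g * (star t₀ * t') * g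
                    = (g * p) * (star t₀ * t') * (p * g) := by rw [hgpm, hpgm]
                  _ = g * (p * (star t₀ * t') * p) * g := by simp only [mul_assoc]
                  _ = 0 := hgvg
              · calc g * (star t₀ * t') * g
                    = (g * p) * (star t₀ * t') * (p * g) := by rw [hgpm, hpgm]
                  _ = g * (p * (star t₀ * t') * p) * g := by simp only [mul_assoc]
                  _ = g * 0 * g := by rw [hpkill t' h htT' htne']
                  _ = 0 := by rw [SG.mulz, SG.zmul]
            · exfalso
              obtain ⟨himgP, _, _, _⟩ := hkeyF p hpI hp0 hpf
              have hu₀mem : t₀ * p ∈ KA.Supp (x * iota K S p) := by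
                rw [himgP]
                exact Finset.mem_image_of_mem _ ht₀
              have humem : t * p ∈ KA.Supp (x * iota K S p) := by
                rw [himgP]
                exact Finset.mem_image_of_mem _ htT
              obtain ⟨hu₀p, hu₀star⟩ := hfix p hpI hp0 hpf _ hu₀mem
              obtain ⟨hup, hustar⟩ := hfix p hpI hp0 hpf _ humem
              have hvform : p * (star t₀ * t) * p = star (t₀ * p) * (t * p) := by
                rw [SG.star_mul, SG.star_idem hpI]
                simp only [mul_assoc]
              have hsvform : star (p * (star t₀ * t) * p) = star (t * p) * (t₀ * p) := by
                rw [hvform, SG.star_mul, SG.star_star]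
              have hAI : IsIdempotentElem ((t * p) * star (t * p)) := SG.mul_star_self_idem _
              have hBI : IsIdempotentElem ((t₀ * p) * star (t₀ * p)) := SG.mul_star_self_idem _
              have hrv' : (star (t₀ * p) * (t * p)) * (star (t * p) * (t₀ * p)) = p := by
                rw [← hvform, ← hsvform]
                exact hrv
              have hkv' : (star (t * p) * (t₀ * p)) * (star (t₀ * p) * (t * p)) = p := by
                rw [← hsvform, ← hvform]
                exact hkv
              have h1 : (t₀ * p) * ((star (t₀ * p) * (t * p)) * (star (t * p) * (t₀ * p)))
                    * star (t₀ * p)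
                  = ((t₀ * p) * star (t₀ * p)) * (((t * p) * star (t * p))
                    * ((t₀ * p) * star (t₀ * p))) := by
                simp only [mul_assoc]
              have h2 : (t₀ * p) * ((star (t₀ * p) * (t * p)) * (star (t * p) * (t₀ * p)))
                    * star (t₀ * p)
                  = (t₀ * p) * star (t₀ * p) := by
                rw [hrv', hu₀p]
              have hBAB : ((t₀ * p) * star (t₀ * p)) * (((t * p) * star (t * p))
                  * ((t₀ * p) * star (t₀ * p))) = (t₀ * p) * star (t₀ * p) := by
                rw [← h1, h2]
              have h1A : (t * p) * ((star (t * p) * (t₀ * p)) * (star (t₀ * p) * (t * p)))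
                    * star (t * p)
                  = ((t * p) * star (t * p)) * (((t₀ * p) * star (t₀ * p))
                    * ((t * p) * star (t * p))) := by
                simp only [mul_assoc]
              have h2A : (t * p) * ((star (t * p) * (t₀ * p)) * (star (t₀ * p) * (t * p)))
                    * star (t * p)
                  = (t * p) * star (t * p) := by
                rw [hkv', hup]
              have hABA : ((t * p) * star (t * p)) * (((t₀ * p) * star (t₀ * p))
                  * ((t * p) * star (t * p))) = (t * p) * star (t * p) := by
                rw [← h1A, h2A]
              have hBA := SG.sandwich_absorb hBI hAI hBAB
              have hAB := SG.sandwich_absorb hAI hBI hABA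
              have hABeq : (t * p) * star (t * p) = (t₀ * p) * star (t₀ * p) := by
                calc (t * p) * star (t * p)
                    = ((t * p) * star (t * p)) * ((t₀ * p) * star (t₀ * p)) := hAB.symm
                  _ = ((t₀ * p) * star (t₀ * p)) * ((t * p) * star (t * p)) :=
                      SG.idem_comm hAI hBI
                  _ = (t₀ * p) * star (t₀ * p) := hBA
              have h6 : (t₀ * p) * (star (t₀ * p) * (t * p)) = t * p := by
                calc (t₀ * p) * (star (t₀ * p) * (t * p))
                    = ((t₀ * p) * star (t₀ * p)) * (t * p) := (mul_assoc _ _ _).symm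
                  _ = ((t * p) * star (t * p)) * (t * p) := by rw [← hABeq]
                  _ = t * p := SG.sss (t * p)
              have h7 : (t * p) * e' = (t₀ * p) * e' := by
                calc (t * p) * e'
                    = ((t₀ * p) * (star (t₀ * p) * (t * p))) * e' := by rw [h6]
                  _ = (t₀ * p) * ((star (t₀ * p) * (t * p)) * e') := mul_assoc _ _ _
                  _ = (t₀ * p) * ((p * (star t₀ * t) * p) * e') := by rw [← hvform]
                  _ = (t₀ * p) * e' := by rw [hve']
              have hpe : p * e' = e' := SG.natle_mul_left he'I he'p
              have h8 : t * e' = t₀ * e' := by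
                calc t * e' = t * (p * e') := by rw [hpe]
                  _ = (t * p) * e' := (mul_assoc _ _ _).symm
                  _ = (t₀ * p) * e' := h7
                  _ = t₀ * (p * e') := mul_assoc _ _ _
                  _ = t₀ * e' := by rw [hpe]
              have he'f : NatLe e' f := SG.natle_trans he'I hpI he'p hpf
              obtain ⟨_, _, hinjE, _⟩ := hkeyF e' he'I he'0 he'f
              exact htne (hinjE t htT t₀ ht₀ h8)
    obtain ⟨p, hpI, hp0, hpf, hpkill⟩ := hind (KA.Supp (x * iota K S f))
    have hBJ : x * iota K S p ∈ J := (hJmul x hx (iota K S p)).2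
    obtain ⟨himg, hne0, hinj, hcoef⟩ := hkeyF p hpI hp0 hpf
    have hdec : x * iota K S p
        = ∑ t ∈ KA.Supp (x * iota K S f), KA.sing (t * p) ((KA.rep (x * iota K S f)).coeff t) := by
      calc x * iota K S p
          = ∑ u ∈ KA.Supp (x * iota K S p), KA.sing u ((KA.rep (x * iota K S p)).coeff u) :=
            KA.decomp _
        _ = ∑ u ∈ (KA.Supp (x * iota K S f)).image (· * p),
              KA.sing u ((KA.rep (x * iota K S p)).coeff u) := by rw [himg]
        _ = ∑ t ∈ KA.Supp (x * iota K S f),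
              KA.sing (t * p) ((KA.rep (x * iota K S p)).coeff (t * p)) :=
            Finset.sum_image (fun a ha b hb h => hinj a ha b hb h)
        _ = ∑ t ∈ KA.Supp (x * iota K S f),
              KA.sing (t * p) ((KA.rep (x * iota K S f)).coeff t) :=
            Finset.sum_congr rfl (fun t ht => by rw [hcoef t ht])
    have hlam0 : (KA.rep (x * iota K S f)).coeff t₀ ≠ 0 := KA.mem_Supp_iff.mp ht₀
    have hW : iota K S (p * star t₀) * (x * iota K S p)
        = KA.sing p ((KA.rep (x * iota K S f)).coeff t₀) := by
      rw [hdec, Finset.mul_sum]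
      have hterm : ∀ t ∈ KA.Supp (x * iota K S f),
          iota K S (p * star t₀) * KA.sing (t * p) ((KA.rep (x * iota K S f)).coeff t)
          = KA.sing ((p * star t₀) * (t * p)) ((KA.rep (x * iota K S f)).coeff t) := by
        intro t ht
        rw [KA.iota_eq_sing, KA.sing_mul_sing, one_mul]
      rw [Finset.sum_congr rfl hterm]
      rw [Finset.sum_eq_single t₀]
      · have hmain : (p * star t₀) * (t₀ * p) = p := by
          have h1 := (hfix p hpI hp0 hpf (t₀ * p) (by
            rw [himg]
            exact Finset.mem_image_of_mem _ ht₀)).2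
          rw [SG.star_mul, SG.star_idem hpI] at h1
          exact h1
        rw [hmain]
      · intro t ht htne
        have h0 : (p * star t₀) * (t * p) = 0 := by
          calc (p * star t₀) * (t * p) = p * (star t₀ * t) * p := by simp only [mul_assoc]
            _ = 0 := hpkill t ht ht htne
        rw [h0, KA.sing_zero_left]
      · intro habs
        exact absurd ht₀ habs
    have hWJ : KA.sing p ((KA.rep (x * iota K S f)).coeff t₀) ∈ J := by
      rw [← hW]
      exact (hJmul _ hBJ (iota K S (p * star t₀))).1
    have hiotap : iota K S p ∈ J := by
      have h5 : KA.sing p ((KA.rep (x * iota K S f)).coeff t₀)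
          * KA.sing p ((KA.rep (x * iota K S f)).coeff t₀)⁻¹ = iota K S p := by
        rw [KA.sing_mul_sing, hpI, mul_inv_cancel₀ hlam0, KA.iota_eq_sing]
      rw [← h5]
      exact (hJmul _ hWJ (KA.sing p ((KA.rep (x * iota K S f)).coeff t₀)⁻¹)).2
    exact hp0 (h2 p hpI hiotap)
  tfae_finish
end

section
/- Let S be a non-zero inverse semigroup with zero, K a field, I the singular ideal of K₀S. If every ideal of K₀S properly containing I contains a non-zero idempotent of S, then S is quasi-fundamental. -/
variable (K S : Type*) [CommRing K] [InverseSemigroup0 S]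

namespace ISAux
open InverseSemigroup0

variable {S : Type*} [InverseSemigroup0 S]

lemma star_star (s : S) : star (star s) = s :=
  (star_unique (star s) s (star_mul_self_star s) (mul_star_mul_self s)).symm

lemma idem_star {e : S} (he : IsIdempotentElem e) : star e = e := by
  have h3 : e * e * e = e := by rw [he, he]
  exact (star_unique e e h3 h3).symm

lemma mul_star_idem (s : S) : IsIdempotentElem (s * star s) := by
  show s * star s * (s * star s) = s * star s
  calc s * star s * (s * star s) = s * star s * s * star s := by rw [mul_assoc, mul_assoc, mul_assoc]
  _ = s * star s := by rw [mul_star_mul_self]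

lemma star_mul_idem (s : S) : IsIdempotentElem (star s * s) := by
  show star s * s * (star s * s) = star s * s
  calc star s * s * (star s * s) = star s * s * star s * s := by rw [mul_assoc, mul_assoc, mul_assoc]
  _ = star s * s := by rw [star_mul_self_star]

/-- idempotents multiply to idempotents and commute -/
lemma idem_mul {e f : S} (he : IsIdempotentElem e) (hf : IsIdempotentElem f) :
    IsIdempotentElem (e * f) ∧ e * f = star (e * f) := by
  set x := star (e * f) with hx
  have h1 : (e * f) * (f * x * e) * (e * f) = e * f := by
    calc (e * f) * (f * x * e) * (e * f)
        = e * (f * f) * x * (e * e) * f := by simp only [mul_assoc]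
      _ = e * f * x * (e * f) := by rw [he, hf]; simp only [mul_assoc]
      _ = e * f := by rw [mul_star_mul_self]
  have h2 : (f * x * e) * (e * f) * (f * x * e) = f * x * e := by
    calc (f * x * e) * (e * f) * (f * x * e)
        = f * (x * ((e * e) * (f * f)) * x) * e := by simp only [mul_assoc]
      _ = f * (x * (e * f) * x) * e := by rw [he, hf]
      _ = f * x * e := by rw [hx, star_mul_self_star]
  have hfxe : f * x * e = x := star_unique (e * f) (f * x * e) h1 h2
  have hxidem : IsIdempotentElem x := by
    show x * x = x
    calc x * x = (f * x * e) * (f * x * e) := by rw [hfxe]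
      _ = f * (x * (e * f) * x) * e := by simp only [mul_assoc]
      _ = f * x * e := by rw [hx, star_mul_self_star]
      _ = x := hfxe
  have hefx : e * f = x := by
    have := idem_star hxidem
    rw [hx] at this
    rw [← star_star (e*f), this]
  exact ⟨hefx ▸ hxidem, hefx.trans (hx ▸ hefx ▸ rfl)⟩

lemma idem_comm {e f : S} (he : IsIdempotentElem e) (hf : IsIdempotentElem f) :
    e * f = f * e := by
  obtain ⟨hef, _⟩ := idem_mul he hf
  obtain ⟨hfe, _⟩ := idem_mul hf he
  have h1 : (e * f) * (f * e) * (e * f) = e * f := by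
    calc (e * f) * (f * e) * (e * f) = e * (f * f) * (e * e) * f := by simp only [mul_assoc]
      _ = (e * f) * (e * f) := by rw [he, hf]; simp only [mul_assoc]
      _ = e * f := hef
  have h2 : (f * e) * (e * f) * (f * e) = f * e := by
    calc (f * e) * (e * f) * (f * e) = f * (e * e) * (f * f) * e := by simp only [mul_assoc]
      _ = (f * e) * (f * e) := by rw [he, hf]; simp only [mul_assoc]
      _ = f * e := hfe
  have := star_unique (e * f) (f * e) h1 h2
  rw [← (idem_mul he hf).2] at this
  exact this.symm

lemma star_mul (a b : S) : star (a * b) = star b * star a := by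
  have key : ∀ u v : S, u * star u * (star v * v) = star v * v * (u * star u) :=
    fun u v => idem_comm (mul_star_idem u) (star_mul_idem v)
  have h1 : (a * b) * (star b * star a) * (a * b) = a * b := by
    calc (a * b) * (star b * star a) * (a * b)
        = a * (b * star b * (star a * a)) * b := by simp only [mul_assoc]
      _ = a * (star a * a * (b * star b)) * b := by rw [key b a]
      _ = (a * star a * a) * (b * star b * b) := by simp only [mul_assoc]
      _ = a * b := by rw [mul_star_mul_self, mul_star_mul_self]
  have h2 : (star b * star a) * (a * b) * (star b * star a) = star b * star a := by
    have key2 : star a * a * (b * star b) = b * star b * (star a * a) :=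
      idem_comm (star_mul_idem a) (mul_star_idem b)
    calc (star b * star a) * (a * b) * (star b * star a)
        = star b * (star a * a * (b * star b)) * star a := by simp only [mul_assoc]
      _ = star b * (b * star b * (star a * a)) * star a := by rw [key2]
      _ = (star b * b * star b) * (star a * a * star a) := by simp only [mul_assoc]
      _ = star b * star a := by rw [star_mul_self_star, star_mul_self_star]
  exact (star_unique (a * b) (star b * star a) h1 h2).symm

lemma natLe_idem_iff {f g : S} (hf : IsIdempotentElem f) : NatLe f g ↔ f = g * f := by
  unfold NatLe
  rw [idem_star hf, mul_assoc, hf]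

lemma natLe_refl {g : S} (hg : IsIdempotentElem g) : NatLe g g :=
  (natLe_idem_iff hg).2 hg.symm

lemma natLe_trans {f₂ f₁ g : S} (hf2 : IsIdempotentElem f₂) (hf1 : IsIdempotentElem f₁)
    (h21 : NatLe f₂ f₁) (h1g : NatLe f₁ g) : NatLe f₂ g := by
  rw [natLe_idem_iff hf2] at h21 ⊢
  rw [natLe_idem_iff hf1] at h1g
  calc f₂ = f₁ * f₂ := h21
    _ = g * f₁ * f₂ := by rw [← h1g]
    _ = g * f₂ := by rw [mul_assoc, ← h21]

lemma mul_star_eq_zero {u : S} (h : u * star u = 0) : u = 0 := by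
  have := mul_star_mul_self u
  rw [h, _root_.InverseSemigroup0.zero_mul] at this
  exact this.symm

end ISAux

namespace ISAux
open InverseSemigroup0

variable {S : Type*} [InverseSemigroup0 S]

lemma conj_idem {e : S} (he : IsIdempotentElem e) (t : S) :
    IsIdempotentElem (star t * e * t) := by
  show star t * e * t * (star t * e * t) = star t * e * t
  have hcomm : e * (t * star t) = t * star t * e := idem_comm he (mul_star_idem t)
  calc star t * e * t * (star t * e * t)
      = star t * (e * (t * star t)) * (e * t) := by simp only [mul_assoc]
    _ = star t * (t * star t * e) * (e * t) := by rw [hcomm]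
    _ = star t * t * star t * (e * e) * t := by simp only [mul_assoc]
    _ = star t * e * t := by rw [he, star_mul_self_star]

/-- The maximal idempotent-separating congruence. -/
def Mu (u v : S) : Prop :=
  ∀ e : S, IsIdempotentElem e → star u * e * u = star v * e * v

lemma mu_refl (u : S) : Mu u u := fun _ _ => rfl
lemma mu_symm {u v : S} (h : Mu u v) : Mu v u := fun e he => (h e he).symm
lemma mu_trans {u v w : S} (h : Mu u v) (h' : Mu v w) : Mu u w :=
  fun e he => (h e he).trans (h' e he)

lemma mu_mul_right {u v : S} (h : Mu u v) (t : S) : Mu (u * t) (v * t) := by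
  intro e he
  have h1 : star u * e * u = star v * e * v := h e he
  calc star (u * t) * e * (u * t) = star t * (star u * e * u) * t := by
        rw [star_mul]; simp only [mul_assoc]
    _ = star t * (star v * e * v) * t := by rw [h1]
    _ = star (v * t) * e * (v * t) := by rw [star_mul]; simp only [mul_assoc]

lemma mu_mul_left {u v : S} (h : Mu u v) (t : S) : Mu (t * u) (t * v) := by
  intro e he
  have h1 : star u * (star t * e * t) * u = star v * (star t * e * t) * v :=
    h _ (conj_idem he t)
  calc star (t * u) * e * (t * u) = star u * (star t * e * t) * u := by
        rw [star_mul]; simp only [mul_assoc]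
    _ = star v * (star t * e * t) * v := h1
    _ = star (t * v) * e * (t * v) := by rw [star_mul]; simp only [mul_assoc]

lemma mu_zero {u : S} (h : Mu u 0) : u = 0 := by
  have := h (u * star u) (mul_star_idem u)
  have h2 : star u * (u * star u) * u = star u * u := by
    calc star u * (u * star u) * u = star u * u * (star u * u) := by simp only [mul_assoc]
      _ = star u * u := star_mul_idem u
  rw [h2, _root_.InverseSemigroup0.mul_zero] at this
  -- this : star u * u = star 0 * 0 * 0 → 0
  have h3 : star u * u = 0 := this
  have h4 := mul_star_mul_self u
  rw [mul_assoc, h3, _root_.InverseSemigroup0.mul_zero] at h4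
  exact h4.symm

section Central
variable {s : S} (hc : ∀ e : S, IsIdempotentElem e → s * e = e * s)
include hc

lemma star_central : ∀ e : S, IsIdempotentElem e → star s * e = e * star s := by
  intro e he
  have := congrArg star (hc e he)
  rw [star_mul, star_mul, idem_star he] at this
  exact this.symm

lemma mu_s_e0 : Mu s (star s * s) := by
  intro e he
  have h1 : star s * e = e * star s := star_central hc e he
  have he0 : IsIdempotentElem (star s * s) := star_mul_idem s
  have hcomm : e * (star s * s) = star s * s * e := idem_comm he he0
  have lhs : star s * e * s = star s * s * e := by
    rw [h1, mul_assoc, hcomm]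
  have rhs : star (star s * s) * e * (star s * s) = star s * s * e := by
    rw [idem_star he0]
    calc star s * s * e * (star s * s) = star s * s * (e * (star s * s)) :=
          mul_assoc _ _ _
      _ = star s * s * (star s * s * e) := by rw [hcomm]
      _ = star s * s * (star s * s) * e := (mul_assoc _ _ _).symm
      _ = star s * s * e := by rw [he0]
  rw [lhs, rhs]
end Central

end ISAux

namespace KAux
open ISAux

variable {K S : Type*} [Field K] [InverseSemigroup0 S]

lemma msingle_eq (a : S) (b : K) :
    (MonoidAlgebra.single a b : MonoidAlgebra K S).coeff = Finsupp.single a b := rfl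

lemma mul_single0 (c : K) (w : MonoidAlgebra K S) :
    ∃ c' : K, w * MonoidAlgebra.single (0 : S) c = MonoidAlgebra.single (0 : S) c' := by
  induction w using MonoidAlgebra.induction with
  | zero => exact ⟨0, by simp⟩
  | single_add t b w _ _ ih =>
    obtain ⟨c', hc'⟩ := ih
    refine ⟨b * c + c', ?_⟩
    rw [add_mul, hc', MonoidAlgebra.single_mul_single, InverseSemigroup0.mul_zero,
      ← MonoidAlgebra.single_add]

lemma single0_mul (c : K) (w : MonoidAlgebra K S) :
    ∃ c' : K, MonoidAlgebra.single (0 : S) c * w = MonoidAlgebra.single (0 : S) c' := by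
  induction w using MonoidAlgebra.induction with
  | zero => exact ⟨0, by simp⟩
  | single_add t b w _ _ ih =>
    obtain ⟨c', hc'⟩ := ih
    refine ⟨c * b + c', ?_⟩
    rw [mul_add, hc', MonoidAlgebra.single_mul_single, InverseSemigroup0.zero_mul,
      ← MonoidAlgebra.single_add]

/-- The explicit congruence: difference lies in the span of `single 0`. -/
noncomputable def C0 : RingCon (MonoidAlgebra K S) where
  r a b := ∃ c : K, a - b = MonoidAlgebra.single 0 c
  iseqv := by
    refine ⟨fun a => ⟨0, by simp⟩, ?_, ?_⟩
    · rintro a b ⟨c, hc⟩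
      exact ⟨-c, by rw [← neg_sub, hc, MonoidAlgebra.single_neg]⟩
    · rintro a b d ⟨c, hc⟩ ⟨c', hc'⟩
      exact ⟨c + c', by rw [← sub_add_sub_cancel a b d, hc, hc', ← MonoidAlgebra.single_add]⟩
  add' := by
    rintro a b x y ⟨c, hc⟩ ⟨c', hc'⟩
    exact ⟨c + c', by rw [add_sub_add_comm, hc, hc', ← MonoidAlgebra.single_add]⟩
  mul' := by
    rintro a b x y ⟨c, hc⟩ ⟨c', hc'⟩
    have key : a * x - b * y = a * (x - y) + (a - b) * y := by
      rw [mul_sub, sub_mul]; abel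
    rw [hc, hc'] at key
    obtain ⟨c₁, h₁⟩ := mul_single0 c' a
    obtain ⟨c₂, h₂⟩ := single0_mul (K := K) (S := S) c y
    exact ⟨c₁ + c₂, by rw [key, h₁, h₂, ← MonoidAlgebra.single_add]⟩

lemma contractedCon_eq : contractedCon K S = (C0 : RingCon (MonoidAlgebra K S)) := by
  apply le_antisymm
  · apply RingCon.ringConGen_le.2
    rintro x y ⟨hx, hy⟩
    exact ⟨1, by rw [hx, hy, sub_zero]⟩
  · rw [RingCon.le_def]
    rintro a b ⟨c, hc⟩
    have base : contractedCon K S (MonoidAlgebra.single (0:S) (1:K)) 0 :=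
      RingConGen.Rel.of _ _ ⟨rfl, rfl⟩
    have h0c : contractedCon K S (MonoidAlgebra.single (0:S) c) 0 := by
      have := (contractedCon K S).mul base ((contractedCon K S).refl
        (MonoidAlgebra.single (0:S) c))
      rw [MonoidAlgebra.single_mul_single, one_mul, zero_mul,
        InverseSemigroup0.zero_mul] at this
      exact this
    have : contractedCon K S (b + MonoidAlgebra.single (0:S) c) (b + 0) :=
      (contractedCon K S).add ((contractedCon K S).refl b) h0c
    rw [add_zero] at this
    have hab : a = b + MonoidAlgebra.single (0:S) c := by
      rw [← hc]; abel
    rw [← hab] at this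
    exact this

lemma mk0_eq_iff {a b : MonoidAlgebra K S} :
    mk0 K S a = mk0 K S b ↔ ∃ c : K, a - b = MonoidAlgebra.single 0 c := by
  rw [show mk0 K S a = (a : (contractedCon K S).Quotient) from rfl]
  rw [show mk0 K S b = (b : (contractedCon K S).Quotient) from rfl]
  rw [RingCon.eq, contractedCon_eq]
  rfl

lemma mk0_add (a b : MonoidAlgebra K S) : mk0 K S (a + b) = mk0 K S a + mk0 K S b :=
  rfl

lemma mk0_mul (a b : MonoidAlgebra K S) : mk0 K S (a * b) = mk0 K S a * mk0 K S b :=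
  rfl

lemma mk0_neg (a : MonoidAlgebra K S) : mk0 K S (-a) = -mk0 K S a :=
  rfl

lemma mk0_sub (a b : MonoidAlgebra K S) : mk0 K S (a - b) = mk0 K S a - mk0 K S b :=
  rfl

lemma mk0_zero : mk0 K S (0 : MonoidAlgebra K S) = 0 := rfl

lemma mk0_surjective (x : Kzero K S) : ∃ w : MonoidAlgebra K S, mk0 K S w = x :=
  Quot.induction_on x fun w => ⟨w, rfl⟩

lemma sg_zero (c : K) : mk0 K S (MonoidAlgebra.single (0 : S) c) = 0 := by
  rw [← mk0_zero]
  exact mk0_eq_iff.2 ⟨c, by rw [sub_zero]⟩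

lemma sg_mul_sg (t u : S) (c d : K) :
    mk0 K S (MonoidAlgebra.single t c) * mk0 K S (MonoidAlgebra.single u d) =
      mk0 K S (MonoidAlgebra.single (t * u) (c * d)) := by
  rw [← mk0_mul, MonoidAlgebra.single_mul_single]

lemma iota_mul (u v : S) : iota K S u * iota K S v = iota K S (u * v) := by
  unfold iota
  rw [sg_mul_sg, one_mul]

lemma iota_zero : iota K S (0 : S) = 0 := sg_zero 1

lemma iota_inj {u v : S} (h : iota K S u = iota K S v) (hu : u ≠ 0) : u = v := by
  by_contra hne
  obtain ⟨c, hc⟩ := mk0_eq_iff.1 h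
  have hc' : (Finsupp.single u (1:K)) - Finsupp.single v 1 = Finsupp.single (0:S) c := congrArg MonoidAlgebra.coeff hc
  have := congrArg (fun w : S →₀ K => w u) hc' 
  simp only [Finsupp.sub_apply] at this
  rw [Finsupp.single_eq_same, Finsupp.single_eq_of_ne' (fun hvu => hne (hvu.symm)),
    Finsupp.single_eq_of_ne' (fun h0 => hu h0.symm), sub_zero] at this
  exact one_ne_zero this

lemma iota_ne_zero {u : S} (hu : u ≠ 0) : iota K S u ≠ 0 := by
  intro h
  rw [← iota_zero (K := K) (S := S)] at h
  exact hu (iota_inj h hu)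

end KAux

namespace KAux
open ISAux
open Classical

variable {K S : Type*} [Field K] [InverseSemigroup0 S]

/-- Generators for the kernel of `K₀S → K₀(S/μ)`. -/
def Ngen : Set (MonoidAlgebra K S) :=
  {w | (∃ u v : S, ∃ c : K, Mu u v ∧
          w = MonoidAlgebra.single u c - MonoidAlgebra.single v c) ∨
       (∃ c : K, w = MonoidAlgebra.single 0 c)}

noncomputable def N0 : AddSubgroup (MonoidAlgebra K S) := AddSubgroup.closure Ngen

lemma single0_mem_N0 (c : K) : (MonoidAlgebra.single (0:S) c) ∈ N0 (K := K) (S := S) :=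
  AddSubgroup.subset_closure (Or.inr ⟨c, rfl⟩)

lemma mu_single_mem_N0 {u v : S} (h : Mu u v) (c : K) :
    (MonoidAlgebra.single u c - MonoidAlgebra.single v c) ∈ N0 (K := K) (S := S) :=
  AddSubgroup.subset_closure (Or.inl ⟨u, v, c, h, rfl⟩)

lemma N0_mul_single {w : MonoidAlgebra K S} (hw : w ∈ N0 (K := K) (S := S)) (t : S) (d : K) :
    w * MonoidAlgebra.single t d ∈ N0 (K := K) (S := S) := by
  revert hw
  have : N0 (K := K) (S := S) ≤
      AddSubgroup.comap (AddMonoidHom.mulRight (MonoidAlgebra.single t d)) N0 := by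
    rw [N0, AddSubgroup.closure_le]
    rintro w (⟨u, v, c, hμ, rfl⟩ | ⟨c, rfl⟩)
    · have : (MonoidAlgebra.single u c - MonoidAlgebra.single v c) *
          MonoidAlgebra.single t d =
          MonoidAlgebra.single (u*t) (c*d) - MonoidAlgebra.single (v*t) (c*d) := by
        rw [sub_mul, MonoidAlgebra.single_mul_single, MonoidAlgebra.single_mul_single]
      refine AddSubgroup.mem_comap.2 ?_
      show (_ : MonoidAlgebra K S) * _ ∈ _
      rw [this]
      exact mu_single_mem_N0 (mu_mul_right hμ t) _
    · refine AddSubgroup.mem_comap.2 ?_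
      show (_ : MonoidAlgebra K S) * _ ∈ _
      rw [MonoidAlgebra.single_mul_single, InverseSemigroup0.zero_mul]
      exact single0_mem_N0 _
  exact fun hw => this hw

lemma single_mul_N0 {w : MonoidAlgebra K S} (hw : w ∈ N0 (K := K) (S := S)) (t : S) (d : K) :
    MonoidAlgebra.single t d * w ∈ N0 (K := K) (S := S) := by
  revert hw
  have : N0 (K := K) (S := S) ≤
      AddSubgroup.comap (AddMonoidHom.mulLeft (MonoidAlgebra.single t d)) N0 := by
    rw [N0, AddSubgroup.closure_le]
    rintro w (⟨u, v, c, hμ, rfl⟩ | ⟨c, rfl⟩)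
    · have : MonoidAlgebra.single t d *
          (MonoidAlgebra.single u c - MonoidAlgebra.single v c) =
          MonoidAlgebra.single (t*u) (d*c) - MonoidAlgebra.single (t*v) (d*c) := by
        rw [mul_sub, MonoidAlgebra.single_mul_single, MonoidAlgebra.single_mul_single]
      refine AddSubgroup.mem_comap.2 ?_
      show (_ : MonoidAlgebra K S) * _ ∈ _
      rw [this]
      exact mu_single_mem_N0 (mu_mul_left hμ t) _
    · refine AddSubgroup.mem_comap.2 ?_
      show (_ : MonoidAlgebra K S) * _ ∈ _
      rw [MonoidAlgebra.single_mul_single, InverseSemigroup0.mul_zero]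
      exact single0_mem_N0 _
  exact fun hw => this hw

lemma N0_mul {w : MonoidAlgebra K S} (hw : w ∈ N0 (K := K) (S := S))
    (x : MonoidAlgebra K S) : w * x ∈ N0 (K := K) (S := S) := by
  induction x using MonoidAlgebra.induction with
  | zero => rw [MulZeroClass.mul_zero]; exact N0.zero_mem
  | single_add t b x _ _ ih =>
    rw [mul_add]
    exact N0.add_mem (N0_mul_single hw t b) ih

lemma mul_N0 {w : MonoidAlgebra K S} (hw : w ∈ N0 (K := K) (S := S))
    (x : MonoidAlgebra K S) : x * w ∈ N0 (K := K) (S := S) := by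
  induction x using MonoidAlgebra.induction with
  | zero => rw [MulZeroClass.zero_mul]; exact N0.zero_mem
  | single_add t b x _ _ ih =>
    rw [add_mul]
    exact N0.add_mem (single_mul_N0 hw t b) ih

/-- Sum of coefficients over the `μ`-class of `f`. -/
noncomputable def lam (f : S) : MonoidAlgebra K S → K := fun w =>
  w.coeff.sum fun u c => if Mu u f then c else 0

lemma lam_add (f : S) (w w' : MonoidAlgebra K S) :
    lam f (w + w') = lam f w + lam f w' := by
  classical
  unfold lam
  exact Finsupp.sum_add_index' (fun a => ite_self 0) (fun a b₁ b₂ => by split <;> simp)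

noncomputable def lamHom (f : S) : MonoidAlgebra K S →+ K :=
  AddMonoidHom.mk' (lam f) (lam_add f)

lemma lam_single (f u : S) (c : K) :
    lamHom (K := K) f (MonoidAlgebra.single u c) = if Mu u f then c else 0 := by
  classical
  show lam f (MonoidAlgebra.single u c) = _
  unfold lam
  rw [msingle_eq]
  exact Finsupp.sum_single_index (ite_self 0)

lemma lam_N0 {f : S} (hf : f ≠ 0) {w : MonoidAlgebra K S}
    (hw : w ∈ N0 (K := K) (S := S)) : lamHom (K := K) f w = 0 := by
  have : N0 (K := K) (S := S) ≤ (lamHom (K := K) f).ker := by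
    rw [N0, AddSubgroup.closure_le]
    rintro w (⟨u, v, c, hμ, rfl⟩ | ⟨c, rfl⟩)
    · have huv : Mu u f ↔ Mu v f := ⟨fun h => mu_trans (mu_symm hμ) h, fun h => mu_trans hμ h⟩
      have : lamHom (K := K) f (MonoidAlgebra.single u c - MonoidAlgebra.single v c) =
          (if Mu u f then c else 0) - (if Mu v f then c else 0) := by
        rw [map_sub, lam_single, lam_single]
      refine AddMonoidHom.mem_ker.2 ?_
      rw [this]
      by_cases h : Mu u f
      · rw [if_pos h, if_pos (huv.1 h), sub_self]
      · rw [if_neg h, if_neg (fun h' => h (huv.2 h')), sub_self]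
    · refine AddMonoidHom.mem_ker.2 ?_
      rw [lam_single]
      have : ¬ Mu (0 : S) f := fun h => hf (mu_zero (mu_symm h))
      rw [if_neg this]
  exact AddMonoidHom.mem_ker.1 (this hw)

lemma single_notmem_N0 {f : S} (hf : f ≠ 0) :
    (MonoidAlgebra.single f (1:K)) ∉ N0 (K := K) (S := S) := by
  intro hmem
  have := lam_N0 hf hmem
  rw [lam_single, if_pos (mu_refl f)] at this
  exact one_ne_zero this

/-- The image of `N0` in the contracted algebra. -/
def NN : Set (Kzero K S) := {x | ∃ w ∈ N0 (K := K) (S := S), mk0 K S w = x}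

lemma NN_zero : (0 : Kzero K S) ∈ NN := ⟨0, N0.zero_mem, rfl⟩

lemma NN_add {x y : Kzero K S} (hx : x ∈ NN) (hy : y ∈ NN) : x + y ∈ NN := by
  obtain ⟨w, hw, rfl⟩ := hx
  obtain ⟨w', hw', rfl⟩ := hy
  exact ⟨w + w', N0.add_mem hw hw', mk0_add w w'⟩

lemma NN_neg {x : Kzero K S} (hx : x ∈ NN) : -x ∈ NN := by
  obtain ⟨w, hw, rfl⟩ := hx
  exact ⟨-w, N0.neg_mem hw, mk0_neg w⟩

lemma NN_mul_right {x : Kzero K S} (hx : x ∈ NN) (y : Kzero K S) : x * y ∈ NN := by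
  obtain ⟨w, hw, rfl⟩ := hx
  obtain ⟨w', rfl⟩ := mk0_surjective y
  exact ⟨w * w', N0_mul hw w', mk0_mul w w'⟩

lemma NN_mul_left {x : Kzero K S} (hx : x ∈ NN) (y : Kzero K S) : y * x ∈ NN := by
  obtain ⟨w, hw, rfl⟩ := hx
  obtain ⟨w', rfl⟩ := mk0_surjective y
  exact ⟨w' * w, mul_N0 hw w', mk0_mul w' w⟩

lemma iota_sub_iota_mem_NN {u v : S} (h : Mu u v) :
    iota K S u - iota K S v ∈ NN := by
  refine ⟨MonoidAlgebra.single u 1 - MonoidAlgebra.single v 1, mu_single_mem_N0 h 1, ?_⟩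
  rw [mk0_sub]; rfl

lemma iota_notmem_NN {f : S} (hf : f ≠ 0) : iota K S f ∉ NN (K := K) (S := S) := by
  rintro ⟨w, hw, hmk⟩
  obtain ⟨c, hc⟩ := mk0_eq_iff.1 hmk
  have : MonoidAlgebra.single f (1:K) = w - MonoidAlgebra.single (0:S) c := by
    rw [← hc]; abel
  have hmem : (MonoidAlgebra.single f (1:K)) ∈ N0 (K := K) (S := S) := by
    rw [this]
    exact N0.sub_mem hw (single0_mem_N0 c)
  exact single_notmem_N0 hf hmem

end KAux

namespace KAux
open ISAux

variable {K S : Type*} [Field K] [InverseSemigroup0 S]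

/-- The defining predicate of the auxiliary ideal `J`. -/
def JP (x : Kzero K S) : Prop :=
  ∀ g : S, IsIdempotentElem g → g ≠ 0 →
    ∃ f : S, IsIdempotentElem f ∧ f ≠ 0 ∧ NatLe f g ∧ x * iota K S f ∈ NN

lemma JP_zero : JP (0 : Kzero K S) := fun g hg hg0 =>
  ⟨g, hg, hg0, natLe_refl hg, by rw [zero_mul]; exact NN_zero⟩

lemma iota_absorb {f₁ f : S} (hf : IsIdempotentElem f) (hle : NatLe f f₁) :
    iota K S f = iota K S f₁ * iota K S f := by
  rw [iota_mul, ← (natLe_idem_iff hf).1 hle]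

lemma JP_add {x y : Kzero K S} (hx : JP x) (hy : JP y) : JP (x + y) := by
  intro g hg hg0
  obtain ⟨f₁, hf₁, hf₁0, hf₁le, hx1⟩ := hx g hg hg0
  obtain ⟨f₂, hf₂, hf₂0, hf₂le, hy2⟩ := hy f₁ hf₁ hf₁0
  refine ⟨f₂, hf₂, hf₂0, natLe_trans hf₂ hf₁ hf₂le hf₁le, ?_⟩
  rw [add_mul]
  refine NN_add ?_ hy2
  rw [iota_absorb hf₂ hf₂le, ← mul_assoc]
  exact NN_mul_right hx1 _

lemma JP_neg {x : Kzero K S} (hx : JP x) : JP (-x) := by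
  intro g hg hg0
  obtain ⟨f, hf, hf0, hfle, hx1⟩ := hx g hg hg0
  refine ⟨f, hf, hf0, hfle, ?_⟩
  have e : (-x) * iota K S f = -(x * iota K S f) := neg_mul x _
  rw [e]
  exact NN_neg hx1

lemma JP_left {x : Kzero K S} (hx : JP x) (z : Kzero K S) : JP (z * x) := by
  intro g hg hg0
  obtain ⟨f, hf, hf0, hfle, hx1⟩ := hx g hg hg0
  exact ⟨f, hf, hf0, hfle, by rw [mul_assoc]; exact NN_mul_left hx1 z⟩

lemma JP_right {x : Kzero K S} (hx : JP x) (z : Kzero K S) : JP (x * z) := by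
  obtain ⟨w, rfl⟩ := mk0_surjective z
  induction w using MonoidAlgebra.induction with
  | zero =>
    rw [mk0_zero, MulZeroClass.mul_zero]
    exact JP_zero
  | single_add t b w' _ _ ih =>
    intro g hg hg0
    obtain ⟨f₁, hf₁, hf₁0, hf₁le, hw'mem⟩ := ih g hg hg0
    have split : ∀ f : S, x * mk0 K S (MonoidAlgebra.single t b + w') * iota K S f =
        x * mk0 K S (MonoidAlgebra.single t b) * iota K S f +
          x * mk0 K S w' * iota K S f := by
      intro f
      rw [mk0_add, mul_add, add_mul]
    have hxsingle : ∀ f : S, x * mk0 K S (MonoidAlgebra.single t b) * iota K S f =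
        x * mk0 K S (MonoidAlgebra.single (t * f) b) := by
      intro f
      rw [mul_assoc]
      unfold iota
      rw [sg_mul_sg, mul_one]
    by_cases hu : t * f₁ = 0
    · refine ⟨f₁, hf₁, hf₁0, hf₁le, ?_⟩
      rw [split, hxsingle, hu, sg_zero, MulZeroClass.mul_zero, zero_add]
      exact hw'mem
    · set u := t * f₁ with hudef
      have hh : IsIdempotentElem (u * star u) := mul_star_idem u
      have hh0 : u * star u ≠ 0 := fun h0 => hu (mul_star_eq_zero h0)
      obtain ⟨f', hf', hf'0, hf'le, hxf'⟩ := hx (u * star u) hh hh0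
      have hf'h : u * star u * f' = f' := ((natLe_idem_iff hf').1 hf'le).symm
      have hf'h2 : f' * (u * star u) = f' := by
        rw [idem_comm hf' hh, hf'h]
      set f := star u * f' * u with hfdef
      -- star u = f₁ * star t
      have hstaru : star u = f₁ * star t := by
        rw [hudef, ISAux.star_mul, idem_star hf₁]
      have huf₁ : u * f₁ = u := by
        rw [hudef, mul_assoc, hf₁]
      have hustaru : u * star u = u * star t := by
        rw [hstaru, ← mul_assoc, huf₁]
      -- t * star u = u * star u
      have htstaru : t * star u = u * star u := by
        have h1 : t * star u = u * star t := by
          rw [hstaru, ← mul_assoc, ← hudef]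
        rw [h1, ← hustaru]
      -- idempotency of f
      have hkey : u * (star u * (f' * u)) = f' * u := by
        calc u * (star u * (f' * u)) = u * star u * (f' * u) := (mul_assoc _ _ _).symm
          _ = u * star u * f' * u := (mul_assoc _ _ _).symm
          _ = f' * u := by rw [hf'h]
      have hfidem : IsIdempotentElem f := by
        show f * f = f
        calc f * f = star u * (f' * (u * (star u * (f' * u)))) := by
              rw [hfdef]; simp only [mul_assoc]
          _ = star u * (f' * (f' * u)) := by rw [hkey]
          _ = star u * (f' * f' * u) := by rw [mul_assoc f' f' u]
          _ = star u * f' * u := by rw [hf', ← mul_assoc]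
      -- f ≠ 0
      have hf'back : u * f * star u = f' := by
        calc u * f * star u = u * star u * f' * (u * star u) := by
              rw [hfdef]; simp only [mul_assoc]
          _ = f' * (u * star u) := by rw [hf'h]
          _ = f' := hf'h2
      have hf0 : f ≠ 0 := by
        intro h0
        apply hf'0
        rw [← hf'back, h0, _root_.InverseSemigroup0.mul_zero,
          _root_.InverseSemigroup0.zero_mul]
      -- NatLe f f₁
      have hf₁staru : f₁ * star u = star u := by
        rw [hstaru, ← mul_assoc, hf₁]
      have hff₁ : f₁ * f = f := by
        calc f₁ * f = f₁ * star u * (f' * u) := by rw [hfdef]; simp only [mul_assoc]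
          _ = star u * (f' * u) := by rw [hf₁staru]
          _ = f := by rw [hfdef, mul_assoc]
      have hfle : NatLe f f₁ := (natLe_idem_iff hfidem).2 hff₁.symm
      refine ⟨f, hfidem, hf0, natLe_trans hfidem hf₁ hfle hf₁le, ?_⟩
      rw [split, hxsingle]
      refine NN_add ?_ ?_
      · -- x * mk0 (single (t*f) b) ∈ NN
        have htf : t * f = f' * u := by
          calc t * f = t * star u * (f' * u) := by rw [hfdef]; simp only [mul_assoc]
            _ = u * star u * (f' * u) := by rw [htstaru]
            _ = u * star u * f' * u := (mul_assoc _ _ _).symm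
            _ = f' * u := by rw [hf'h]
        have hsplit2 : mk0 K S (MonoidAlgebra.single (t * f) b) =
            iota K S f' * mk0 K S (MonoidAlgebra.single u b) := by
          unfold iota
          rw [sg_mul_sg, one_mul, htf]
        rw [hsplit2, ← mul_assoc]
        exact NN_mul_right hxf' _
      · -- x * mk0 w' * iota f ∈ NN
        rw [iota_absorb hfidem hfle, ← mul_assoc]
        exact NN_mul_right hw'mem _

end KAux

open ISAux KAux

/-- If `S` is a non-zero inverse semigroup with zero and every ideal of `K₀S` properly
containing the singular ideal contains a non-zero idempotent of `S`, then `S` is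
quasi-fundamental. -/
theorem stmt13 {K S : Type*} [Field K] [InverseSemigroup0 S]
    (hS : ∃ s : S, s ≠ 0)
    (h : ∀ J : Set (Kzero K S), IsIdealSet K S J →
      {x : Kzero K S | Singular K S x} ⊆ J → {x : Kzero K S | Singular K S x} ≠ J →
      ∃ e : S, IsIdempotentElem e ∧ e ≠ 0 ∧ iota K S e ∈ J) :
    QuasiFundamental S := by
  intro s hs hcomm
  have he₀ : IsIdempotentElem (star s * s) := star_mul_idem s
  have hse : s * (star s * s) = s := by
    rw [← mul_assoc, InverseSemigroup0.mul_star_mul_self]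
  have he₀0 : (star s * s) ≠ 0 := by
    intro h0
    apply hs
    rw [← hse, h0, _root_.InverseSemigroup0.mul_zero]
  by_cases ha : Singular K S (iota K S s - iota K S (star s * s))
  · -- the element `ι s - ι (s* s)` is singular: extract an idempotent below `s` directly
    obtain ⟨f, hfidem, hf0, hfle, hprod⟩ := ha (star s * s) he₀ he₀0
    rw [sub_mul, sub_eq_zero, iota_mul, iota_mul] at hprod
    have hef : (star s * s) * f = f := ((natLe_idem_iff hfidem).1 hfle).symm
    rw [hef] at hprod
    have hsf : f = s * f := iota_inj hprod.symm hf0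
    refine ⟨f, hf0, hfidem, ?_⟩
    show f = s * star f * f
    rw [idem_star hfidem, mul_assoc, hfidem]
    exact hsf
  · -- otherwise use the hypothesis on ideals with the ideal `J = {x | JP x}`
    have hmu : Mu s (star s * s) := mu_s_e0 hcomm
    have hJideal : IsIdealSet K S {x : Kzero K S | JP x} := by
      refine ⟨JP_zero, fun a haJ b hbJ => JP_add haJ hbJ, fun a haJ => JP_neg haJ,
        fun a haJ x => ⟨JP_left haJ x, JP_right haJ x⟩⟩
    have hsub : {x : Kzero K S | Singular K S x} ⊆ {x : Kzero K S | JP x} := by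
      intro x hx g hg hg0
      obtain ⟨f, hf, hf0, hfle, hxf⟩ := hx g hg hg0
      exact ⟨f, hf, hf0, hfle, by rw [hxf]; exact NN_zero⟩
    have haJ : JP (iota K S s - iota K S (star s * s)) := by
      intro g hg hg0
      exact ⟨g, hg, hg0, natLe_refl hg,
        NN_mul_right (iota_sub_iota_mem_NN hmu) _⟩
    have hne : {x : Kzero K S | Singular K S x} ≠ {x : Kzero K S | JP x} := by
      intro heq
      apply ha
      have : (iota K S s - iota K S (star s * s)) ∈ {x : Kzero K S | Singular K S x} := by
        rw [heq]; exact haJ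
      exact this
    obtain ⟨g₀, hg₀idem, hg₀0, hg₀J⟩ := h _ hJideal hsub hne
    obtain ⟨f, hf, hf0, hfle, hmem⟩ := hg₀J g₀ hg₀idem hg₀0
    have hgf : iota K S g₀ * iota K S f = iota K S f := by
      rw [iota_mul, ← (natLe_idem_iff hf).1 hfle]
    rw [hgf] at hmem
    exact absurd hmem (iota_notmem_NN hf0)
end

section
/- Let S be a congruence-free inverse semigroup with zero and K a field. Then the singular ideal I of K₀S is the unique maximal two-sided ideal of K₀S, and K₀S/I is the unique simple quotient of K₀S. -/
variable (K S : Type*) [CommRing K] [InverseSemigroup0 S]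

/-- `S` (non-trivial, with zero) is congruence-free: its only congruences are the
equality relation and the universal relation. -/
def CongruenceFree (S : Type*) [InverseSemigroup0 S] : Prop :=
  (∃ s : S, s ≠ 0) ∧
    ∀ r : S → S → Prop, Equivalence r →
      (∀ a b c d : S, r a b → r c d → r (a * c) (b * d)) →
      (∀ a b : S, r a b ↔ a = b) ∨ (∀ a b : S, r a b)


namespace ISG
variable {S : Type*} [InverseSemigroup0 S]

lemma zmul (s : S) : (0:S) * s = 0 := InverseSemigroup0.zero_mul s
lemma mzero (s : S) : s * 0 = 0 := InverseSemigroup0.mul_zero s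
lemma sss (s : S) : s * star s * s = s := InverseSemigroup0.mul_star_mul_self s
lemma s's' (s : S) : star s * s * star s = star s := InverseSemigroup0.star_mul_self_star s
lemma star_uniq (s t : S) (h1 : s * t * s = s) (h2 : t * s * t = t) : t = star s :=
  InverseSemigroup0.star_unique s t h1 h2

lemma star_star (s : S) : star (star s) = s := (star_uniq (star s) s (s's' s) (sss s)).symm

lemma star_idem {e : S} (he : e * e = e) : star e = e :=
  (star_uniq e e (by rw [he, he]) (by rw [he, he])).symm

lemma star_zero' : star (0:S) = 0 := star_idem (mzero 0)

lemma midem {e : S} (he : e * e = e) (x : S) : e * (e * x) = e * x := by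
  rw [← mul_assoc, he]

lemma idem_mul_idem {e f : S} (he : e * e = e) (hf : f * f = f) : (e*f)*(e*f) = e*f := by
  set a := star (e*f) with ha
  have h1 : (e*f) * a * (e*f) = e*f := sss _
  have h2 : a * (e*f) * a = a := s's' _
  have hg1 : (e*f) * (f*a*e) * (e*f) = e*f := by
    calc (e*f) * (f*a*e) * (e*f)
        = e * ((f*f) * (a * ((e*e) * f))) := by simp only [mul_assoc]
      _ = e * (f * (a * (e * f))) := by rw [he, hf]
      _ = (e*f) * a * (e*f) := by simp only [mul_assoc]
      _ = e*f := h1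
  have hg2 : (f*a*e) * (e*f) * (f*a*e) = f*a*e := by
    calc (f*a*e) * (e*f) * (f*a*e)
        = f * (a * ((e*e) * ((f*f) * (a * e)))) := by simp only [mul_assoc]
      _ = f * (a * (e * (f * (a * e)))) := by rw [he, hf]
      _ = f * ((a * (e*f) * a) * e) := by simp only [mul_assoc]
      _ = f * (a * e) := by rw [h2]
      _ = f * a * e := by rw [mul_assoc]
  have hga : f*a*e = a := star_uniq (e*f) (f*a*e) hg1 hg2
  have haa : a * a = a := by
    conv_lhs => rw [← hga]
    calc (f*a*e) * (f*a*e) = f * ((a * (e*f) * a) * e) := by simp only [mul_assoc]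
      _ = f * (a * e) := by rw [h2]
      _ = f*a*e := by rw [mul_assoc]
      _ = a := hga
  have hefa : e*f = a := by
    rw [← star_star (e*f), ← ha, star_idem haa]
  rw [hefa]; exact haa

lemma idem_comm {e f : S} (he : e * e = e) (hf : f * f = f) : e * f = f * e := by
  have hef := idem_mul_idem he hf
  have hfe := idem_mul_idem hf he
  have h1 : (e*f) * (f*e) * (e*f) = e*f := by
    calc (e*f) * (f*e) * (e*f)
        = e * ((f*f) * ((e*e) * f)) := by simp only [mul_assoc]
      _ = e * (f * (e * f)) := by rw [he, hf]
      _ = (e*f)*(e*f) := by simp only [mul_assoc]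
      _ = e*f := hef
  have h2 : (f*e) * (e*f) * (f*e) = f*e := by
    calc (f*e) * (e*f) * (f*e)
        = f * ((e*e) * ((f*f) * e)) := by simp only [mul_assoc]
      _ = f * (e * (f * e)) := by rw [he, hf]
      _ = (f*e)*(f*e) := by simp only [mul_assoc]
      _ = f*e := hfe
  have := star_uniq (e*f) (f*e) h1 h2
  rw [this, star_idem hef]

/-- commuting idempotents, inside a right-assoc product -/
lemma comm₃ {e f : S} (he : e * e = e) (hf : f * f = f) (x : S) :
    e * (f * x) = f * (e * x) := by
  rw [← mul_assoc, idem_comm he hf, mul_assoc]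

lemma star_mul (s t : S) : star (s * t) = star t * star s := by
  have hd : (star s * s) * (t * star t) = (t * star t) * (star s * s) := by
    have h1 : (star s * s) * (star s * s) = star s * s := by
      calc star s * s * (star s * s) = (star s * s * star s) * s := by simp only [mul_assoc]
        _ = star s * s := by rw [s's']
    have h2 : (t * star t) * (t * star t) = t * star t := by
      calc t * star t * (t * star t) = (t * star t * t) * star t := by simp only [mul_assoc]
        _ = t * star t := by rw [sss]
    exact idem_comm h1 h2
  symm; apply star_uniq
  · calc s * t * (star t * star s) * (s * t)
        = s * ((t * star t) * (star s * s)) * t := by simp only [mul_assoc]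
      _ = s * ((star s * s) * (t * star t)) * t := by rw [hd]
      _ = (s * star s * s) * (t * star t * t) := by simp only [mul_assoc]
      _ = s * t := by rw [sss, sss]
  · calc star t * star s * (s * t) * (star t * star s)
        = star t * ((star s * s) * (t * star t)) * star s := by simp only [mul_assoc]
      _ = star t * ((t * star t) * (star s * s)) * star s := by rw [hd]
      _ = (star t * t * star t) * (star s * s * star s) := by simp only [mul_assoc]
      _ = star t * star s := by rw [s's', s's']

lemma idem_ss' (s : S) : (s * star s) * (s * star s) = s * star s := by
  calc s * star s * (s * star s) = (s * star s * s) * star s := by simp only [mul_assoc]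
    _ = s * star s := by rw [sss]

lemma idem_s's (s : S) : (star s * s) * (star s * s) = star s * s := by
  calc star s * s * (star s * s) = (star s * s * star s) * s := by simp only [mul_assoc]
    _ = star s * s := by rw [s's']

lemma eq_zero_of_s's {s : S} (h : star s * s = 0) : s = 0 := by
  have := sss s
  rw [mul_assoc, h, mzero] at this; exact this.symm

lemma eq_zero_of_ss' {s : S} (h : s * star s = 0) : s = 0 := by
  have := sss s
  rw [h, zmul] at this; exact this.symm

lemma s's_ne {s : S} (h : s ≠ 0) : star s * s ≠ 0 := fun hh => h (eq_zero_of_s's hh)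
lemma ss'_ne {s : S} (h : s ≠ 0) : s * star s ≠ 0 := fun hh => h (eq_zero_of_ss' hh)

lemma star_ne {s : S} (h : s ≠ 0) : star s ≠ 0 := by
  intro hs
  apply h; rw [← sss s, hs, mzero, zmul]

lemma natle_iff {f e : S} (hf : f * f = f) : NatLe f e ↔ f = e * f := by
  unfold NatLe
  rw [star_idem hf, mul_assoc, hf]

lemma conj_idem {h : S} (hh : h * h = h) (x : S) :
    (x * h * star x) * (x * h * star x) = x * h * star x := by
  have hc := comm₃ (idem_s's x) hh
  calc (x * h * star x) * (x * h * star x)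
      = x * (h * ((star x * x) * (h * (star x)))) := by simp only [mul_assoc]
    _ = x * (h * (h * ((star x * x) * star x))) := by rw [hc]
    _ = x * ((h*h) * ((star x * x) * star x)) := by simp only [mul_assoc]
    _ = x * (h * (star x * (x * star x))) := by rw [hh]; simp only [mul_assoc]
    _ = (x * h) * ((star x * x) * star x) := by simp only [mul_assoc]
    _ = x * h * star x := by rw [s's']

/-! ### consequences of congruence-freeness -/

/-- the syntactic congruence of `{0}` is trivial -/
lemma lemZ (hcf : CongruenceFree S) (a b : S)
    (h0 : a = 0 ↔ b = 0)
    (hl : ∀ u : S, u * a = 0 ↔ u * b = 0)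
    (hr : ∀ v : S, a * v = 0 ↔ b * v = 0)
    (hlr : ∀ u v : S, u * a * v = 0 ↔ u * b * v = 0) : a = b := by
  set r : S → S → Prop := fun x y =>
    (x = 0 ↔ y = 0) ∧ (∀ u : S, u * x = 0 ↔ u * y = 0) ∧
    (∀ v : S, x * v = 0 ↔ y * v = 0) ∧ (∀ u v : S, u * x * v = 0 ↔ u * y * v = 0) with hrdef
  have hequiv : Equivalence r := by
    constructor
    · intro x; exact ⟨Iff.rfl, fun _ => Iff.rfl, fun _ => Iff.rfl, fun _ _ => Iff.rfl⟩
    · intro x y ⟨h1, h2, h3, h4⟩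
      exact ⟨h1.symm, fun u => (h2 u).symm, fun v => (h3 v).symm, fun u v => (h4 u v).symm⟩
    · intro x y z ⟨h1, h2, h3, h4⟩ ⟨g1, g2, g3, g4⟩
      exact ⟨h1.trans g1, fun u => (h2 u).trans (g2 u), fun v => (h3 v).trans (g3 v),
        fun u v => (h4 u v).trans (g4 u v)⟩
  have hmul : ∀ x y z w : S, r x y → r z w → r (x * z) (y * w) := by
    intro x y z w ⟨h1, h2, h3, h4⟩ ⟨g1, g2, g3, g4⟩
    refine ⟨?_, ?_, ?_, ?_⟩
    · exact (h3 z).trans (g2 y)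
    · intro u
      rw [← mul_assoc, ← mul_assoc]
      exact (h4 u z).trans ((g2 (u * y)).trans (by rw [mul_assoc]))
    · intro v
      rw [mul_assoc, mul_assoc]
      exact (h3 (z * v)).trans (by rw [← mul_assoc, ← mul_assoc]; exact g4 y v)
    · intro u v
      have e1 : u * (x * z) * v = (u * x) * (z * v) := by simp only [mul_assoc]
      have e2 : u * (y * w) * v = (u * y) * (w * v) := by simp only [mul_assoc]
      rw [e1, e2]
      refine (h4 u (z * v)).trans ?_
      rw [show (u * y) * (z * v) = u * y * z * v by simp only [mul_assoc],
        show (u * y) * (w * v) = u * y * w * v by simp only [mul_assoc]]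
      exact g4 (u * y) v
  rcases hcf.2 r hequiv hmul with heq | huniv
  · exact (heq a b).mp ⟨h0, hl, hr, hlr⟩
  · obtain ⟨s, hs⟩ := hcf.1
    exact absurd ((huniv 0 s).1.mp rfl) hs

/-- Density: if `g ≤ f` meets every nonzero idempotent below `f`, then `g = f`. -/
lemma density (hcf : CongruenceFree S) {f g : S} (hf : f*f = f) (hf0 : f ≠ 0)
    (hg : g*g = g) (hgf : g = f * g)
    (H : ∀ f' : S, f'*f' = f' → f' ≠ 0 → f' = f * f' → f' * g ≠ 0) : g = f := by
  have hgf' : g = g * f := by rw [idem_comm hg hf]; exact hgf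
  -- the two-sided condition
  have cond4 : ∀ u v : S, u * g * v = 0 ↔ u * f * v = 0 := by
    intro u v
    constructor
    · -- u*g*v = 0 → u*f*v = 0
      intro hgv
      by_contra hfv
      obtain ⟨w, hw⟩ : ∃ w, w = u * f * v := ⟨_, rfl⟩
      have hw0 : w ≠ 0 := by rw [hw]; exact hfv
      -- f' = f * (star u * u) * (v * star v), shown nonzero via z = w * star v
      obtain ⟨A, hA⟩ : ∃ A, A = star u * u := ⟨_, rfl⟩
      obtain ⟨B, hB⟩ : ∃ B, B = v * star v := ⟨_, rfl⟩
      have hAi : A * A = A := by rw [hA]; exact idem_s's u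
      have hBi : B * B = B := by rw [hB]; exact idem_ss' v
      obtain ⟨f', hf'⟩ : ∃ f', f' = f * A * B := ⟨_, rfl⟩
      have hf'i : f'*f' = f' := by
        rw [hf']; exact idem_mul_idem (idem_mul_idem hf hAi) hBi
      have hf'le : f' = f * f' := by
        rw [hf']
        calc f * A * B = (f * f) * A * B := by rw [hf]
          _ = f * (f * A * B) := by simp only [mul_assoc]
      -- star w
      have hsw : star w = star v * (f * star u) := by
        rw [hw, star_mul, star_mul, star_idem hf]
      -- z = w * star v ≠ 0
      have hzz' : (w * star v) * star (w * star v) = w * star w := by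
        rw [star_mul, star_star]
        calc w * star v * (v * star w) = (w * (star v * v)) * star w := by simp only [mul_assoc]
          _ = ((u * f) * (v * (star v * v))) * star w := by rw [hw]; simp only [mul_assoc]
          _ = ((u * f) * v) * star w := by rw [← mul_assoc v, sss v]
          _ = w * star w := by rw [hw]
      have hz0 : w * star v ≠ 0 := by
        intro h
        apply ss'_ne hw0
        rw [← hzz', h, zmul]
      have hz'z : star (w * star v) * (w * star v) = f' := by
        rw [star_mul, star_star, hsw]
        calc v * (star v * (f * star u)) * (w * star v)
            = v * (star v * (f * (A * (f * B)))) := by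
              rw [hw, hA, hB]; simp only [mul_assoc]
          _ = v * (star v * (f * (f * (A * B)))) := by rw [comm₃ hAi hf]
          _ = v * (star v * (f * (A * B))) := by rw [midem hf]
          _ = B * (f * (A * B)) := by rw [hB]; simp only [mul_assoc]
          _ = f * (B * (A * B)) := by rw [comm₃ hBi hf]
          _ = f * (A * (B * B)) := by rw [comm₃ hBi hAi]
          _ = f * (A * B) := by rw [hBi]
          _ = f' := by rw [hf', mul_assoc]
      have hf'0 : f' ≠ 0 := by
        rw [← hz'z]
        exact s's_ne hz0
      have := H f' hf'i hf'0 hf'le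
      apply this
      -- f' * g = f * (A * (B * g)) = ... = 0 using u*g*v = 0
      have hBg : B * g = g * B := idem_comm hBi hg
      have hAg : A * g = g * A := idem_comm hAi hg
      have hkill : A * (B * g) = 0 := by
        have : star u * (u * g * v) * star v = 0 := by rw [hgv, mzero, zmul]
        calc A * (B * g) = A * (g * B) := by rw [hBg]
          _ = star u * ((u * g) * (v * star v)) := by rw [hA, hB]; simp only [mul_assoc]
          _ = star u * (u * g * v) * star v := by simp only [mul_assoc]
          _ = 0 := this
      calc f' * g = f * (A * (B * g)) := by rw [hf']; simp only [mul_assoc]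
        _ = 0 := by rw [hkill, mzero]
    · -- u*f*v = 0 → u*g*v = 0
      intro hfv
      have key : v * (star v * (g * v)) = g * v := by
        have hBg : (v * star v) * g = g * (v * star v) := idem_comm (idem_ss' v) hg
        calc v * (star v * (g * v)) = ((v * star v) * g) * v := by simp only [mul_assoc]
          _ = (g * (v * star v)) * v := by rw [hBg]
          _ = g * (v * (star v * v)) := by simp only [mul_assoc]
          _ = g * v := by rw [← mul_assoc v, sss v]
      have main : (u * f * v) * (star v * (g * v)) = u * g * v := by
        calc (u * f * v) * (star v * (g * v))
            = u * (f * (v * (star v * (g * v)))) := by simp only [mul_assoc]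
          _ = u * (f * (g * v)) := by rw [key]
          _ = u * g * v := by rw [show f * (g * v) = g * v by rw [← mul_assoc, ← hgf], mul_assoc]
      rw [← main, hfv, zmul]
  -- the other conditions follow
  have cond1 : g = 0 ↔ f = 0 := by
    have := cond4 f f
    rwa [show f * g * f = g by rw [← hgf]; exact hgf'.symm, show f * f * f = f by rw [hf, hf]]
      at this
  have cond2 : ∀ u : S, u * g = 0 ↔ u * f = 0 := by
    intro u
    have := cond4 u f
    rwa [show u * g * f = u * g by rw [mul_assoc, ← hgf'],
      show u * f * f = u * f by rw [mul_assoc, hf]] at this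
  have cond3 : ∀ v : S, g * v = 0 ↔ f * v = 0 := by
    intro v
    have := cond4 f v
    rwa [show f * g * v = g * v by rw [← hgf], show f * f * v = f * v by rw [hf]] at this
  exact lemZ hcf g f cond1 cond2 cond3 cond4

/-- contrapositive form of density -/
lemma densityC (hcf : CongruenceFree S) {f g : S} (hf : f*f = f) (hf0 : f ≠ 0)
    (hg : g*g = g) (hgf : g = f * g) (hne : g ≠ f) :
    ∃ f' : S, f'*f' = f' ∧ f' ≠ 0 ∧ f' = f * f' ∧ f' * g = 0 := by
  by_contra h
  push_neg at h
  exact hne (density hcf hf hf0 hg hgf (fun f' h1 h2 h3 => h f' h1 h2 h3))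

/-- fundamentality -/
lemma fundamental (hcf : CongruenceFree S) (a b : S)
    (h : ∀ e : S, e * e = e → a * e * star a = b * e * star b) : a = b := by
  set r : S → S → Prop := fun x y => ∀ e : S, e * e = e → x * e * star x = y * e * star y
    with hrdef
  have hequiv : Equivalence r :=
    ⟨fun x e _ => rfl, fun h e he => (h e he).symm, fun h1 h2 e he => (h1 e he).trans (h2 e he)⟩
  have hmul : ∀ x y z w : S, r x y → r z w → r (x * z) (y * w) := by
    intro x y z w hxy hzw e he
    have hzi := conj_idem he w
    calc (x * z) * e * star (x * z) = x * (z * e * star z) * star x := by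
          rw [star_mul]; simp only [mul_assoc]
      _ = x * (w * e * star w) * star x := by rw [hzw e he]
      _ = y * (w * e * star w) * star y := hxy _ hzi
      _ = (y * w) * e * star (y * w) := by rw [star_mul]; simp only [mul_assoc]
  rcases hcf.2 r hequiv hmul with heq | huniv
  · exact (heq a b).mp h
  · exfalso
    obtain ⟨s, hs⟩ := hcf.1
    have ht := idem_s's s
    have := huniv 0 (star s * s) (star s * s) ht
    rw [zmul, zmul, star_idem ht, ht, ht] at this
    exact s's_ne hs this.symm

/-- 0-simplicity -/
lemma zsimple (hcf : CongruenceFree S) {c : S} (hc : c ≠ 0) (t : S) (ht : t ≠ 0) :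
    t = c ∨ (∃ u, t = c * u) ∨ (∃ v, t = v * c) ∨ (∃ u v, t = u * c * v) := by
  set I : S → Prop := fun x =>
    x = c ∨ (∃ u, x = c * u) ∨ (∃ v, x = v * c) ∨ (∃ u v, x = u * c * v) with hI
  have Iright : ∀ x w, I x → I (x * w) := by
    rintro x w (rfl | ⟨u, rfl⟩ | ⟨v, rfl⟩ | ⟨u, v, rfl⟩)
    · exact Or.inr (Or.inl ⟨w, rfl⟩)
    · exact Or.inr (Or.inl ⟨u * w, by rw [mul_assoc]⟩)
    · exact Or.inr (Or.inr (Or.inr ⟨v, w, rfl⟩))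
    · exact Or.inr (Or.inr (Or.inr ⟨u, v * w, by rw [mul_assoc, mul_assoc]⟩))
  have Ileft : ∀ x w, I x → I (w * x) := by
    rintro x w (rfl | ⟨u, rfl⟩ | ⟨v, rfl⟩ | ⟨u, v, rfl⟩)
    · exact Or.inr (Or.inr (Or.inl ⟨w, rfl⟩))
    · exact Or.inr (Or.inr (Or.inr ⟨w, u, by rw [mul_assoc]⟩))
    · exact Or.inr (Or.inr (Or.inl ⟨w * v, by rw [mul_assoc]⟩))
    · exact Or.inr (Or.inr (Or.inr ⟨w * u, v, by simp only [mul_assoc]⟩))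
  set r : S → S → Prop := fun x y => x = y ∨ (I x ∧ I y) with hr
  have hequiv : Equivalence r := by
    constructor
    · exact fun x => Or.inl rfl
    · rintro x y (rfl | ⟨h1, h2⟩)
      · exact Or.inl rfl
      · exact Or.inr ⟨h2, h1⟩
    · rintro x y z (rfl | ⟨h1, h2⟩) h
      · exact h
      · rcases h with rfl | ⟨h3, h4⟩
        · exact Or.inr ⟨h1, h2⟩
        · exact Or.inr ⟨h1, h4⟩
  have hmul : ∀ x y z w : S, r x y → r z w → r (x * z) (y * w) := by
    rintro x y z w (rfl | ⟨h1, h2⟩) (rfl | ⟨h3, h4⟩)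
    · exact Or.inl rfl
    · exact Or.inr ⟨Ileft z x h3, Ileft w x h4⟩
    · exact Or.inr ⟨Iright x z h1, Iright y z h2⟩
    · exact Or.inr ⟨Iright x z h1, Iright y w h2⟩
  rcases hcf.2 r hequiv hmul with heq | huniv
  · exfalso
    have : r c 0 := Or.inr ⟨Or.inl rfl, Or.inr (Or.inl ⟨0, (mzero c).symm⟩)⟩
    exact hc ((heq c 0).mp this)
  · rcases huniv t 0 with rfl | ⟨h1, _⟩
    · exact absurd rfl ht
    · exact h1

/-- germ equality: if `g (s* t) g = g` then `s g = t g`. -/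
lemma germ_eq {s t g : S} (hg : g*g = g) (h : g * (star s * t) * g = g) :
    s * g = t * g := by
  obtain ⟨σ, hσ⟩ : ∃ σ, σ = s * g := ⟨_, rfl⟩
  obtain ⟨τ, hτ⟩ : ∃ τ, τ = t * g := ⟨_, rfl⟩
  have hστ : star σ * τ = g := by
    rw [hσ, hτ, star_mul, star_idem hg]

    calc g * star s * (t * g) = g * (star s * t) * g := by simp only [mul_assoc]
      _ = g := h
  have h1 : (σ * star σ) * τ = σ := by
    rw [mul_assoc, hστ, hσ, mul_assoc, hg]
  have h2 : star τ * ((σ * star σ) * τ) = g := by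
    rw [h1, ← star_star σ, ← star_mul, hστ, star_idem hg]
  have hτg : τ * g = τ := by rw [hτ, mul_assoc, hg]
  have : τ = σ := by
    calc τ = τ * g := hτg.symm
      _ = τ * (star τ * ((σ * star σ) * τ)) := by rw [h2]
      _ = (τ * star τ) * ((σ * star σ) * τ) := by simp only [mul_assoc]
      _ = (σ * star σ) * ((τ * star τ) * τ) := by
          rw [← mul_assoc, idem_comm (idem_ss' τ) (idem_ss' σ)]; simp only [mul_assoc]
      _ = (σ * star σ) * τ := by rw [sss]
      _ = σ := h1
  rw [← hσ, ← hτ, this]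

/-- Endgame lemma: either `u` can be cut off below `g`, or `g u g = g`. -/
lemma EG (hcf : CongruenceFree S) {u g : S} (hg : g*g = g) (hg0 : g ≠ 0) :
    (∃ f', f'*f' = f' ∧ f' ≠ 0 ∧ f' = g * f' ∧ f' * u * f' = 0) ∨ g * u * g = g := by
  obtain ⟨A, hA⟩ : ∃ A, A = star u * u := ⟨_, rfl⟩
  obtain ⟨B, hB⟩ : ∃ B, B = u * star u := ⟨_, rfl⟩
  have hAi : A*A = A := by rw [hA]; exact idem_s's u
  have hBi : B*B = B := by rw [hB]; exact idem_ss' u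
  by_cases hAg : A * g = g
  case neg =>
    left
    have h1 : (A*g)*(A*g) = A*g := idem_mul_idem hAi hg
    have h2 : A*g = g*(A*g) := by rw [idem_comm hAi hg, ← mul_assoc, hg]
    obtain ⟨f', hi, h0, hle, hkill⟩ := densityC hcf hg hg0 h1 h2 hAg
    have hfg' : f' = f' * g := by rw [← idem_comm hi hg] at hle; exact hle
    have hfA : f' * A = 0 := by
      have h9 : f' * A = f' * (A * g) := by
        conv_lhs => rw [hfg']
        rw [mul_assoc, idem_comm hg hAi]
      rw [h9]; exact hkill
    have huf : u * f' = 0 := by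
      apply eq_zero_of_s's
      calc star (u * f') * (u * f') = f' * (A * f') := by
            rw [star_mul, star_idem hi, hA]; simp only [mul_assoc]
        _ = (f' * A) * f' := by rw [mul_assoc]
        _ = 0 := by rw [hfA, zmul]
    exact ⟨f', hi, h0, hle, by rw [mul_assoc, huf, mzero]⟩
  case pos =>
  by_cases hBg : B * g = g
  case neg =>
    left
    have h1 : (B*g)*(B*g) = B*g := idem_mul_idem hBi hg
    have h2 : B*g = g*(B*g) := by rw [idem_comm hBi hg, ← mul_assoc, hg]
    obtain ⟨f', hi, h0, hle, hkill⟩ := densityC hcf hg hg0 h1 h2 hBg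
    have hfg' : f' = f' * g := by rw [← idem_comm hi hg] at hle; exact hle
    have hfB : f' * B = 0 := by
      have h9 : f' * B = f' * (B * g) := by
        conv_lhs => rw [hfg']
        rw [mul_assoc, idem_comm hg hBi]
      rw [h9]; exact hkill
    have hfu : f' * u = 0 := by
      apply eq_zero_of_ss'
      calc (f' * u) * star (f' * u) = f' * (B * f') := by
            rw [star_mul, star_idem hi, hB]; simp only [mul_assoc]
        _ = (f' * B) * f' := by rw [mul_assoc]
        _ = 0 := by rw [hfB, zmul]
    exact ⟨f', hi, h0, hle, by rw [hfu, zmul]⟩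
  case pos =>
  by_cases hgug : g * u * g = g
  · right; exact hgug
  left
  have hstarg : star g = g := star_idem hg
  have hex : ∃ e, e*e = e ∧ (g*u*g)*e*star (g*u*g) ≠ g*e*star g := by
    by_contra hcon; push_neg at hcon
    exact hgug (fundamental hcf (g*u*g) g (fun e he => hcon e he))
  obtain ⟨e, he, hne⟩ := hex
  obtain ⟨q, hq⟩ : ∃ q, q = g*e*g := ⟨_, rfl⟩
  have hqi : q*q = q := by
    rw [hq]; have := conj_idem he g; rwa [hstarg] at this
  obtain ⟨p, hp⟩ : ∃ p, p = u*q*star u := ⟨_, rfl⟩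
  have hpi : p*p = p := by rw [hp]; exact conj_idem hqi u
  obtain ⟨d, hd⟩ : ∃ d, d = p * g := ⟨_, rfl⟩
  have hdi : d*d = d := by rw [hd]; exact idem_mul_idem hpi hg
  have hgpg : g * (p * g) = p * g := by
    rw [← mul_assoc, idem_comm hg hpi, mul_assoc, hg]
  have hd1 : (g*u*g)*e*star (g*u*g) = d := by
    have expand : (g*u*g)*e*star (g*u*g) = g * (p * g) := by
      rw [star_mul, star_mul, hstarg, hp, hq]
      simp only [mul_assoc]
    rw [expand, hgpg, hd]
  have hned : d ≠ q := by
    rw [← hd1, hq]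
    rwa [hstarg] at hne
  have hgq : g * q = q := by rw [hq, ← mul_assoc, ← mul_assoc, hg]
  have hgd : g * d = d := by rw [hd]; exact hgpg
  by_cases hcase : d * q = q
  case neg =>
    have hq0 : q ≠ 0 := by
      intro h; rw [h, mzero] at hcase; exact hcase rfl
    have hdqi : (d*q)*(d*q) = d*q := idem_mul_idem hdi hqi
    have hdqle : d*q = q*(d*q) := by rw [idem_comm hdi hqi, ← mul_assoc, hqi]
    obtain ⟨f', hi, h0, hle, hkill⟩ := densityC hcf hqi hq0 hdqi hdqle hcase
    have hfq' : f' = f' * q := by rw [← idem_comm hi hqi] at hle; exact hle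
    have hfd : f' * d = 0 := by
      calc f' * d = f' * (q * d) := by rw [← mul_assoc, ← hfq']
        _ = f' * (d * q) := by rw [idem_comm hqi hdi]
        _ = 0 := hkill
    have hfg : f' = g * f' := by
      conv_lhs => rw [hle]
      rw [← hgq, mul_assoc, ← hle]
    have hstq : star q = q := star_idem hqi
    have hXz : f' * u * q = 0 := by
      apply eq_zero_of_ss'
      calc (f'*u*q) * star (f'*u*q)
          = f' * (u * (q * (q * (star u * f')))) := by
            rw [star_mul, star_mul, hstq, star_idem hi]; simp only [mul_assoc]
        _ = f' * (u * (q * (star u * f'))) := by rw [midem hqi]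
        _ = f' * ((u * q * star u) * f') := by simp only [mul_assoc]
        _ = f' * (p * f') := by rw [← hp]
        _ = f' * (p * (g * f')) := by rw [← hfg]
        _ = (f' * (p * g)) * f' := by simp only [mul_assoc]
        _ = (f' * d) * f' := by rw [← hd]
        _ = 0 := by rw [hfd, zmul]
    refine ⟨f', hi, h0, hfg, ?_⟩
    have h5 : f' * u * f' = f' * u * q * f' := by
      rw [mul_assoc (f'*u) q f', ← hle]
    rw [h5, hXz, zmul]
  case pos =>
    have hne2 : q * d ≠ d := by
      rw [idem_comm hqi hdi, hcase]
      exact fun h => hned h.symm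
    have hd0 : d ≠ 0 := by
      intro h
      apply hned
      rw [h, ← hcase, h, zmul]
    have hqdi : (q*d)*(q*d) = q*d := idem_mul_idem hqi hdi
    have hqdle : q*d = d*(q*d) := by rw [idem_comm hqi hdi, ← mul_assoc, hdi]
    obtain ⟨f', hi, h0, hle, hkill⟩ := densityC hcf hdi hd0 hqdi hqdle hne2
    have hfd' : f' = f' * d := by rw [← idem_comm hi hdi] at hle; exact hle
    have hfq : f' * q = 0 := by
      calc f' * q = f' * (d * q) := by rw [← mul_assoc, ← hfd']
        _ = f' * (q * d) := by rw [idem_comm hdi hqi]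
        _ = 0 := hkill
    have hfg : f' = g * f' := by
      conv_lhs => rw [hle]
      rw [← hgd, mul_assoc, ← hle]
    have hpf : p * f' = f' := by
      have hpd : p * d = d := by rw [hd, ← mul_assoc, hpi]
      conv_lhs => rw [hle]
      rw [← mul_assoc, hpd, ← hle]
    obtain ⟨e₁, he₁⟩ : ∃ x, x = star u * f' * u := ⟨_, rfl⟩
    have he₁i : e₁*e₁ = e₁ := by
      rw [he₁]
      have := conj_idem hi (star u)
      rwa [star_star] at this
    have he₁' : e₁ = A * (q * e₁) := by
      rw [he₁, hA]
      calc star u * f' * u = star u * ((p * f') * u) := by rw [hpf, ← mul_assoc]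
        _ = star u * ((u * q * star u * f') * u) := by rw [hp]
        _ = (star u * u) * (q * (star u * f' * u)) := by simp only [mul_assoc]
    have hqe : q * e₁ = e₁ := by
      calc q * e₁ = q * (A * (q * e₁)) := by rw [← he₁']
        _ = A * (q * (q * e₁)) := by rw [comm₃ hqi hAi]
        _ = A * (q * e₁) := by rw [midem hqi]
        _ = e₁ := he₁'.symm
    obtain ⟨r, hr⟩ : ∃ r, r = e₁ * g := ⟨_, rfl⟩
    have hri : r*r = r := by rw [hr]; exact idem_mul_idem he₁i hg
    have hgr : r = g * r := by
      rw [hr, ← mul_assoc, idem_comm hg he₁i, mul_assoc, hg]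
    have hqr : q * r = r := by rw [hr, ← mul_assoc, hqe]
    have hfr : f' * r = 0 := by rw [← hqr, ← mul_assoc, hfq, zmul]
    have hr0 : r ≠ 0 := by
      intro h
      have hug : f' * (u * g) = 0 := by
        apply eq_zero_of_s's
        calc star (f' * (u*g)) * (f' * (u*g))
            = g * (star u * (f' * (u * g))) := by
              rw [star_mul, star_mul, hstarg, star_idem hi]
              simp only [mul_assoc, midem hi]
          _ = g * (e₁ * g) := by rw [he₁]; simp only [mul_assoc]
          _ = 0 := by rw [← hr, h, mzero]
      have huq : f' * (u * q) = 0 := by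
        rw [hq]
        calc f' * (u * (g*e*g)) = (f' * (u * g)) * (e * g) := by simp only [mul_assoc]
          _ = 0 := by rw [hug, zmul]
      apply h0
      calc f' = f' * d := hfd'
        _ = f' * (p * g) := by rw [hd]
        _ = (f' * (u * q)) * (star u * g) := by rw [hp]; simp only [mul_assoc]
        _ = 0 := by rw [huq, zmul]
    have hue : u * e₁ = f' * u := by
      calc u * e₁ = (u * star u) * (f' * u) := by rw [he₁]; simp only [mul_assoc]
        _ = B * (f' * u) := by rw [hB]
        _ = f' * (B * u) := by rw [comm₃ hBi hi]
        _ = f' * u := by rw [hB, sss]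
    have hur : u * r = f' * (u * g) := by
      rw [hr, ← mul_assoc, hue, mul_assoc]
    refine ⟨r, hri, hr0, hgr, ?_⟩
    calc r * u * r = r * (u * r) := by rw [mul_assoc]
      _ = r * (f' * (u * g)) := by rw [hur]
      _ = (r * f') * (u * g) := by rw [mul_assoc]
      _ = (f' * r) * (u * g) := by rw [idem_comm hri hi]
      _ = 0 := by rw [hfr, zmul]

end ISG

section Alg
open MonoidAlgebra Finsupp ISG
open scoped Classical

variable (K S : Type*) [CommRing K] [InverseSemigroup0 S]

lemma coeff_single0_mul (k : K) (y : MonoidAlgebra K S) (s : S) (hs : s ≠ 0) :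
    (MonoidAlgebra.single (0:S) k * y).coeff s = 0 := by
  rw [MonoidAlgebra.mul_apply, MonoidAlgebra.coeff_single, Finsupp.sum_single_index (by simp)]
  apply Finset.sum_eq_zero
  intro a _
  show (if (0:S) * a = s then k * y.coeff a else 0) = 0
  rw [zmul, if_neg (fun h => hs h.symm)]

lemma coeff_mul_single0 (k : K) (y : MonoidAlgebra K S) (s : S) (hs : s ≠ 0) :
    (y * MonoidAlgebra.single (0:S) k).coeff s = 0 := by
  rw [MonoidAlgebra.mul_apply]
  apply Finset.sum_eq_zero
  intro a _
  show ((MonoidAlgebra.single (0:S) k).coeff.sum fun a₂ b₂ => if a * a₂ = s then y.coeff a * b₂ else 0) = 0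
  rw [MonoidAlgebra.coeff_single, Finsupp.sum_single_index (by simp), mzero, if_neg (fun h => hs h.symm)]

/-- erase, valued in the monoid algebra -/
noncomputable def er (w : MonoidAlgebra K S) : MonoidAlgebra K S := MonoidAlgebra.erase 0 w

lemma coeff_mul_erase (w y : MonoidAlgebra K S) (s : S) (hs : s ≠ 0) :
    (w * y).coeff s = (er K S w * er K S y).coeff s := by
  conv_lhs => rw [← MonoidAlgebra.single_add_erase 0 w, ← MonoidAlgebra.single_add_erase 0 y]
  rw [add_mul, mul_add, mul_add, MonoidAlgebra.coeff_add, MonoidAlgebra.coeff_add,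
    MonoidAlgebra.coeff_add, Finsupp.add_apply, Finsupp.add_apply, Finsupp.add_apply,
    coeff_single0_mul K S (w.coeff 0) _ s hs, coeff_single0_mul K S (w.coeff 0) _ s hs,
    coeff_mul_single0 K S (y.coeff 0) _ s hs, zero_add, zero_add, zero_add]
  rfl

/-- the concrete description of the contracted congruence -/
noncomputable def cCon : RingCon (MonoidAlgebra K S) where
  r := fun x y => ∀ s : S, s ≠ 0 → x.coeff s = y.coeff s
  iseqv := ⟨fun _ _ _ => rfl, fun h s hs => (h s hs).symm,
    fun h1 h2 s hs => (h1 s hs).trans (h2 s hs)⟩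
  mul' := by
    intro w x y z h1 h2 s hs
    have hw : er K S w = er K S x := by
      ext t
      show (Finsupp.erase 0 w.coeff) t = (Finsupp.erase 0 x.coeff) t
      rcases eq_or_ne t 0 with rfl | ht
      · simp
      · rw [Finsupp.erase_ne ht, Finsupp.erase_ne ht]; exact h1 t ht
    have hy : er K S y = er K S z := by
      ext t
      show (Finsupp.erase 0 y.coeff) t = (Finsupp.erase 0 z.coeff) t
      rcases eq_or_ne t 0 with rfl | ht
      · simp
      · rw [Finsupp.erase_ne ht, Finsupp.erase_ne ht]; exact h2 t ht
    rw [coeff_mul_erase K S w y s hs, coeff_mul_erase K S x z s hs, hw, hy]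
  add' := by
    intro w x y z h1 h2 s hs
    rw [MonoidAlgebra.coeff_add, MonoidAlgebra.coeff_add, Finsupp.add_apply, Finsupp.add_apply,
      h1 s hs, h2 s hs]

lemma mk0_eq_iff (x y : MonoidAlgebra K S) :
    mk0 K S x = mk0 K S y ↔ ∀ s : S, s ≠ 0 → x.coeff s = y.coeff s := by
  show (x : (contractedCon K S).Quotient) = y ↔ _
  rw [RingCon.eq]
  constructor
  · intro h
    have hle : contractedCon K S ≤ cCon K S := by
      apply RingCon.ringConGen_le.mpr
      rintro a b ⟨rfl, rfl⟩ s hs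
      show (MonoidAlgebra.single (0:S) (1:K)).coeff s = (0 : MonoidAlgebra K S).coeff s
      rw [MonoidAlgebra.coeff_single, Finsupp.single_eq_of_ne' (fun h => hs h.symm)]
      rfl
    exact hle h
  · intro h
    have hx : x = y + MonoidAlgebra.single (0:S) (x.coeff 0 - y.coeff 0) := by
      ext t
      rcases eq_or_ne t 0 with rfl | ht
      · rw [MonoidAlgebra.coeff_add, Finsupp.add_apply, MonoidAlgebra.coeff_single, Finsupp.single_eq_same]; ring
      · rw [MonoidAlgebra.coeff_add, Finsupp.add_apply, MonoidAlgebra.coeff_single,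
          Finsupp.single_eq_of_ne' (fun hh => ht hh.symm), add_zero]
        exact h t ht
    have base : (contractedCon K S) (MonoidAlgebra.single (0:S) (1:K)) 0 :=
      RingConGen.Rel.of _ _ ⟨rfl, rfl⟩
    have sk : (contractedCon K S) (MonoidAlgebra.single (0:S) (x.coeff 0 - y.coeff 0)) 0 := by
      have := (contractedCon K S).mul
        ((contractedCon K S).refl (MonoidAlgebra.single (0:S) (x.coeff 0 - y.coeff 0))) base
      rwa [MonoidAlgebra.single_mul_single, zmul, mul_one, mul_zero] at this
    have := (contractedCon K S).add ((contractedCon K S).refl y) sk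
    rw [add_zero] at this
    rw [hx]
    exact this

lemma mk0_zero_iff (x : MonoidAlgebra K S) :
    mk0 K S x = 0 ↔ ∀ s : S, s ≠ 0 → x.coeff s = 0 := by
  have : (0 : Kzero K S) = mk0 K S 0 := rfl
  rw [this, mk0_eq_iff]
  simp

lemma mk0_mul (x y : MonoidAlgebra K S) :
    mk0 K S (x * y) = mk0 K S x * mk0 K S y := rfl

lemma mk0_add (x y : MonoidAlgebra K S) :
    mk0 K S (x + y) = mk0 K S x + mk0 K S y := rfl

noncomputable def mk0Hom : MonoidAlgebra K S →+ Kzero K S where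
  toFun := mk0 K S
  map_zero' := rfl
  map_add' := fun _ _ => rfl

lemma mk0_surjective (z : Kzero K S) : ∃ x, mk0 K S x = z := by
  obtain ⟨a, ha⟩ := Quotient.exists_rep z
  exact ⟨a, ha⟩

lemma iota_mul (s t : S) : iota K S s * iota K S t = iota K S (s * t) := by
  rw [iota, iota, iota, ← mk0_mul, MonoidAlgebra.single_mul_single, one_mul]

lemma iota_zero : iota K S 0 = 0 := by
  rw [iota, mk0_zero_iff]
  intro s hs
  rw [MonoidAlgebra.coeff_single, Finsupp.single_eq_of_ne' (fun h => hs h.symm)]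

lemma mk0_single_zero (k : K) : mk0 K S (MonoidAlgebra.single (0:S) k) = 0 := by
  rw [mk0_zero_iff]
  intro s hs
  rw [MonoidAlgebra.coeff_single, Finsupp.single_eq_of_ne' (fun h => hs h.symm)]

lemma iota_ne (hK : (1:K) ≠ 0) {s : S} (hs : s ≠ 0) : iota K S s ≠ 0 := by
  rw [iota, Ne, mk0_zero_iff]
  push_neg
  exact ⟨s, hs, by rw [MonoidAlgebra.coeff_single, Finsupp.single_eq_same]; exact hK⟩

lemma mk0_single_factor (t : S) (k : K) :
    mk0 K S (MonoidAlgebra.single t k) =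
      mk0 K S (MonoidAlgebra.single (t * star t) k) * iota K S t := by
  rw [iota, ← mk0_mul, MonoidAlgebra.single_mul_single, mul_one, sss]

lemma mk0_single_factor' (t : S) (k : K) :
    mk0 K S (MonoidAlgebra.single t k) =
      iota K S t * mk0 K S (MonoidAlgebra.single (star t * t) k) := by
  rw [iota, ← mk0_mul, MonoidAlgebra.single_mul_single, one_mul, ← mul_assoc, sss]

lemma coeff_mul_single (α : MonoidAlgebra K S) (f : S) (s : S) :
    (α * MonoidAlgebra.single f 1 : MonoidAlgebra K S).coeff s
      = ∑ u ∈ α.coeff.support.filter (fun u => u * f = s), α.coeff u := by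
  rw [MonoidAlgebra.mul_apply, Finset.sum_filter]
  apply Finset.sum_congr rfl
  intro u _
  show ((MonoidAlgebra.single f 1).coeff.sum fun a₂ b₂ => if u * a₂ = s then α.coeff u * b₂ else 0)
      = if u * f = s then α.coeff u else 0
  rw [MonoidAlgebra.coeff_single, Finsupp.sum_single_index (by simp)]
  by_cases h : u * f = s
  · rw [if_pos h, if_pos h, mul_one]
  · rw [if_neg h, if_neg h]

lemma mul_single_expand (β : MonoidAlgebra K S) (f : S) :
    mk0 K S (β * MonoidAlgebra.single f 1) =
      mk0 K S (∑ u ∈ β.coeff.support.erase 0, MonoidAlgebra.single (u * f) (β.coeff u)) := by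
  rw [mk0_eq_iff]
  intro s hs
  rw [coeff_mul_single, MonoidAlgebra.coeff_sum, Finset.sum_apply']
  rw [show (∑ u ∈ β.coeff.support.erase 0, (MonoidAlgebra.single (u * f) (β.coeff u)).coeff s)
      = ∑ u ∈ β.coeff.support.erase 0, if u * f = s then β.coeff u else 0 by
    apply Finset.sum_congr rfl
    intro u _
    rw [MonoidAlgebra.coeff_single, Finsupp.single_apply]]
  rw [← Finset.sum_filter]
  apply Finset.sum_congr _ (fun _ _ => rfl)
  ext u
  simp only [Finset.mem_filter, Finset.mem_erase]
  constructor
  · rintro ⟨hu, huf⟩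
    refine ⟨⟨?_, hu⟩, huf⟩
    rintro rfl
    rw [zmul] at huf
    exact hs huf.symm
  · rintro ⟨⟨_, hu⟩, huf⟩
    exact ⟨hu, huf⟩

end Alg


section Main
open MonoidAlgebra Finsupp ISG
open scoped Classical

variable {K S : Type*} [Field K] [InverseSemigroup0 S]

lemma mk0_sum {ι : Type*} (T : Finset ι) (g : ι → MonoidAlgebra K S) :
    mk0 K S (∑ u ∈ T, g u) = ∑ u ∈ T, mk0 K S (g u) :=
  map_sum (mk0Hom K S) g T

lemma core {β : MonoidAlgebra K S} {f' : S}
    (hbig : (β.coeff.support.erase 0).card ≤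
      ((β * MonoidAlgebra.single f' 1 : MonoidAlgebra K S).coeff.support.erase 0).card) :
    (∀ u ∈ β.coeff.support.erase 0, u * f' ≠ 0) ∧
    (∀ u ∈ β.coeff.support.erase 0, ∀ v ∈ β.coeff.support.erase 0, u * f' = v * f' → u = v) ∧
    (β * MonoidAlgebra.single f' 1 : MonoidAlgebra K S).coeff.support.erase 0
      = (β.coeff.support.erase 0).image (· * f') := by
  classical
  have hWV : ((β * MonoidAlgebra.single f' 1 : MonoidAlgebra K S).coeff.support.erase 0)
      ⊆ (β.coeff.support.erase 0).image (· * f') := by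
    intro s hsW
    obtain ⟨hs0, hssup⟩ := Finset.mem_erase.mp hsW
    have hco := Finsupp.mem_support_iff.mp hssup
    rw [coeff_mul_single] at hco
    obtain ⟨u, humem, _⟩ := Finset.exists_ne_zero_of_sum_ne_zero hco
    obtain ⟨husup, huf⟩ := Finset.mem_filter.mp humem
    have hu0 : u ≠ 0 := by rintro rfl; rw [zmul] at huf; exact hs0 huf.symm
    exact Finset.mem_image.mpr ⟨u, Finset.mem_erase.mpr ⟨hu0, husup⟩, huf⟩
  have h1 := Finset.card_le_card hWV
  have h2 : ((β.coeff.support.erase 0).image (· * f')).card ≤ (β.coeff.support.erase 0).card :=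
    Finset.card_image_le
  have hinj : Set.InjOn (· * f') (β.coeff.support.erase 0) :=
    Finset.card_image_iff.mp (le_antisymm h2 (le_trans hbig h1))
  have hWeq : (β * MonoidAlgebra.single f' 1 : MonoidAlgebra K S).coeff.support.erase 0
      = (β.coeff.support.erase 0).image (· * f') :=
    Finset.eq_of_subset_of_card_le hWV (le_trans h2 hbig)
  have hnz : ∀ u ∈ β.coeff.support.erase 0, u * f' ≠ 0 := by
    intro u hu hu0
    have h0V : (0:S) ∈ (β.coeff.support.erase 0).image (· * f') :=
      Finset.mem_image.mpr ⟨u, hu, hu0⟩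
    rw [← hWeq] at h0V
    exact Finset.notMem_erase 0 _ h0V
  exact ⟨hnz, fun u hu v hv h =>
    hinj (Finset.mem_coe.mpr hu) (Finset.mem_coe.mpr hv) h, hWeq⟩

lemma singular_absorb {a : Kzero K S} (ha : Singular K S a) (x : Kzero K S) :
    Singular K S (a * x) := by
  classical
  intro e he he0
  have hem : e * e = e := he
  obtain ⟨ξ, rfl⟩ := mk0_surjective K S x
  have main : ∀ L : Finset S, ∃ f : S, f * f = f ∧ f ≠ 0 ∧ f = e * f ∧
      ∀ s ∈ L, a * iota K S (s * f) = 0 := by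
    intro L
    induction L using Finset.induction_on with
    | empty => exact ⟨e, hem, he0, hem.symm, fun s hs => absurd hs (Finset.notMem_empty s)⟩
    | @insert t L htL ih =>
      obtain ⟨f, hfi, hf0, hfe, hall⟩ := ih
      by_cases h0 : t * f = 0
      · refine ⟨f, hfi, hf0, hfe, ?_⟩
        intro s hs
        rcases Finset.mem_insert.mp hs with rfl | hsL
        · rw [h0, iota_zero, mul_zero]
        · exact hall s hsL
      · obtain ⟨τ, hτ⟩ : ∃ τ, τ = t * f := ⟨_, rfl⟩
        have hτ0 : τ ≠ 0 := by rw [hτ]; exact h0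
        have hqi : (τ * star τ) * (τ * star τ) = τ * star τ := idem_ss' τ
        have hq0 : τ * star τ ≠ 0 := ss'_ne hτ0
        obtain ⟨h, hhi', hh0, hhq, hcut⟩ := ha (τ * star τ) hqi hq0
        have hhi : h * h = h := hhi'
        have hhq' : h = (τ * star τ) * h := (natle_iff hhi).mp hhq
        obtain ⟨f', hf'⟩ : ∃ f', f' = star τ * h * τ := ⟨_, rfl⟩
        have hf'i : f' * f' = f' := by
          rw [hf']
          have := conj_idem hhi (star τ)
          rwa [ISG.star_star] at this
        have hf'0 : f' ≠ 0 := by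
          rw [hf']
          intro hzz
          have hhτ : h * τ = 0 := by
            apply eq_zero_of_s's
            rw [ISG.star_mul, star_idem hhi]
            calc star τ * h * (h * τ) = star τ * ((h * h) * τ) := by simp only [mul_assoc]
              _ = star τ * h * τ := by rw [hhi, mul_assoc]
              _ = 0 := hzz
          apply hh0
          calc h = (τ * star τ) * h := hhq'
            _ = h * (τ * star τ) := idem_comm hqi hhi
            _ = (h * τ) * star τ := by rw [mul_assoc]
            _ = 0 := by rw [hhτ, zmul]
        have hfτ : f * star τ = star τ := by
          rw [hτ, ISG.star_mul, star_idem hfi, ← mul_assoc, hfi]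
        have hf'f : f' = f * f' := by
          rw [hf', ← mul_assoc, ← mul_assoc, hfτ]
        have hf'e : f' = e * f' := by
          calc f' = f * f' := hf'f
            _ = (e * f) * f' := by rw [← hfe]
            _ = e * (f * f') := by rw [mul_assoc]
            _ = e * f' := by rw [← hf'f]
        have hτf' : τ * f' = h * τ := by
          rw [hf']
          calc τ * (star τ * h * τ) = ((τ * star τ) * h) * τ := by simp only [mul_assoc]
            _ = h * τ := by rw [← hhq']
        refine ⟨f', hf'i, hf'0, hf'e, ?_⟩
        intro s hs
        rcases Finset.mem_insert.mp hs with rfl | hsL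
        · have hsf : s * f' = h * τ := by
            calc s * f' = s * (f * f') := by rw [← hf'f]
              _ = (s * f) * f' := by rw [← mul_assoc]
              _ = τ * f' := by rw [← hτ]
              _ = h * τ := hτf'
          rw [hsf, ← iota_mul, ← mul_assoc, hcut, zero_mul]
        · have hsf : s * f' = (s * f) * f' := by rw [mul_assoc, ← hf'f]
          rw [hsf, ← iota_mul, ← mul_assoc, hall s hsL, zero_mul]
  obtain ⟨f, hfi, hf0, hfe, hall⟩ := main ξ.coeff.support
  refine ⟨f, hfi, hf0, (natle_iff hfi).mpr hfe, ?_⟩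
  rw [mul_assoc]
  have hx : mk0 K S ξ * iota K S f = mk0 K S (ξ * MonoidAlgebra.single f 1) := rfl
  rw [hx, mul_single_expand, mk0_sum, Finset.mul_sum]
  apply Finset.sum_eq_zero
  intro u hu
  rw [mk0_single_factor', ← mul_assoc, hall u (Finset.mem_of_mem_erase hu), zero_mul]

end Main

/-- For a congruence-free inverse semigroup with zero and a field `K`, the singular
ideal is the unique maximal two-sided ideal of `K₀S`: it is a proper ideal containing
every proper ideal (so `K₀S` modulo the singular ideal is the unique simple quotient). -/
theorem stmt14 (K S : Type*) [Field K] [InverseSemigroup0 S] (hcf : CongruenceFree S) :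
    IsIdealSet K S {x : Kzero K S | Singular K S x} ∧
    {x : Kzero K S | Singular K S x} ≠ Set.univ ∧
    ∀ J : Set (Kzero K S), IsIdealSet K S J → J ≠ Set.univ →
      J ⊆ {x : Kzero K S | Singular K S x} := by
  classical
  obtain ⟨s₀, hs₀⟩ := hcf.1
  constructor
  · -- Part 1: the singular set is an ideal
    refine ⟨?_, ?_, ?_, ?_⟩
    · -- zero is singular
      intro e he he0
      have hem : e * e = e := he
      exact ⟨e, hem, he0, (ISG.natle_iff hem).mpr hem.symm, by rw [zero_mul]⟩
    · -- sums
      intro a ha b hb e he he0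
      obtain ⟨f₁, hf₁i', hf₁0, hf₁le, haz⟩ := ha e he he0
      have hf₁i : f₁ * f₁ = f₁ := hf₁i'
      obtain ⟨f₂, hf₂i', hf₂0, hf₂le, hbz⟩ := hb f₁ hf₁i' hf₁0
      have hf₂i : f₂ * f₂ = f₂ := hf₂i'
      have hle21 : f₂ = f₁ * f₂ := (ISG.natle_iff hf₂i).mp hf₂le
      have hle1 : f₁ = e * f₁ := (ISG.natle_iff hf₁i).mp hf₁le
      refine ⟨f₂, hf₂i, hf₂0, (ISG.natle_iff hf₂i).mpr ?_, ?_⟩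
      · calc f₂ = f₁ * f₂ := hle21
          _ = (e * f₁) * f₂ := by rw [← hle1]
          _ = e * (f₁ * f₂) := by rw [mul_assoc]
          _ = e * f₂ := by rw [← hle21]
      · have hiotaf : iota K S f₂ = iota K S f₁ * iota K S f₂ := by
          rw [iota_mul, ← hle21]
        rw [add_mul, hbz, add_zero, hiotaf, ← mul_assoc, haz, zero_mul]
    · -- negation
      intro a ha e he he0
      obtain ⟨f, h1, h2, h3, h4⟩ := ha e he he0
      refine ⟨f, h1, h2, h3, ?_⟩
      have h5 : -a * iota K S f + a * iota K S f = 0 := by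
        rw [← add_mul, neg_add_cancel, zero_mul]
      rw [h4, add_zero] at h5
      exact h5
    · -- products
      intro a ha x
      constructor
      · intro e he he0
        obtain ⟨f, h1, h2, h3, h4⟩ := ha e he he0
        exact ⟨f, h1, h2, h3, by rw [mul_assoc, h4, mul_zero]⟩
      · exact singular_absorb ha x
  constructor
  · -- Part 2: the singular set is proper
    intro hU
    have he₀i : (star s₀ * s₀) * (star s₀ * s₀) = star s₀ * s₀ := ISG.idem_s's s₀
    have he₀0 : star s₀ * s₀ ≠ 0 := ISG.s's_ne hs₀
    have hsing : Singular K S (iota K S (star s₀ * s₀)) := by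
      rw [Set.eq_univ_iff_forall] at hU
      exact hU _
    obtain ⟨f, hfi', hf0, hfle, hz⟩ := hsing _ he₀i he₀0
    have hfi : f * f = f := hfi'
    have hef : f = (star s₀ * s₀) * f := (ISG.natle_iff hfi).mp hfle
    rw [iota_mul, ← hef] at hz
    exact iota_ne K S one_ne_zero hf0 hz
  · -- Part 3: every proper ideal is contained in the singular set
    intro J hJ hJuniv a haJ
    by_contra hns
    apply hJuniv
    simp only [Set.mem_setOf_eq, Singular] at hns
    push_neg at hns
    obtain ⟨e₀, he₀i', he₀0, hwit⟩ := hns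
    have he₀i : e₀ * e₀ = e₀ := he₀i'
    obtain ⟨α, hα⟩ := mk0_surjective K S a
    have hMne : {n : ℕ | ∃ f : S, (f * f = f ∧ f ≠ 0 ∧ f = e₀ * f) ∧
        ((α * MonoidAlgebra.single f 1 : MonoidAlgebra K S).coeff.support.erase 0).card = n}.Nonempty :=
      ⟨_, e₀, ⟨he₀i, he₀0, he₀i.symm⟩, rfl⟩
    obtain ⟨f₀, ⟨hf₀i, hf₀0, hf₀e⟩, hf₀card⟩ := Nat.sInf_mem hMne
    have hmin : ∀ f : S, f * f = f → f ≠ 0 → f = e₀ * f →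
        sInf {n : ℕ | ∃ f : S, (f * f = f ∧ f ≠ 0 ∧ f = e₀ * f) ∧
          ((α * MonoidAlgebra.single f 1 : MonoidAlgebra K S).coeff.support.erase 0).card = n}
          ≤ ((α * MonoidAlgebra.single f 1 : MonoidAlgebra K S).coeff.support.erase 0).card :=
      fun f h1 h2 h3 => Nat.sInf_le ⟨f, ⟨h1, h2, h3⟩, rfl⟩
    obtain ⟨β, hβ⟩ : ∃ β, β = (α * MonoidAlgebra.single f₀ 1 : MonoidAlgebra K S) := ⟨_, rfl⟩
    have hQmul : ∀ f' : S, f₀ * f' = f' →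
        (α * MonoidAlgebra.single f' 1 : MonoidAlgebra K S)
          = β * MonoidAlgebra.single f' 1 := by
      intro f' hq
      rw [hβ, mul_assoc, MonoidAlgebra.single_mul_single, one_mul, hq]
    have hQP : ∀ f' : S, f' * f' = f' → f' ≠ 0 → f₀ * f' = f' → f' = e₀ * f' := by
      intro f' h1 h2 h3
      calc f' = f₀ * f' := h3.symm
        _ = (e₀ * f₀) * f' := by rw [← hf₀e]
        _ = e₀ * (f₀ * f') := by rw [mul_assoc]
        _ = e₀ * f' := by rw [h3]
    have hcore : ∀ f' : S, f' * f' = f' → f' ≠ 0 → f₀ * f' = f' →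
        (∀ u ∈ β.coeff.support.erase 0, u * f' ≠ 0) ∧
        (∀ u ∈ β.coeff.support.erase 0, ∀ v ∈ β.coeff.support.erase 0, u * f' = v * f' → u = v) ∧
        (β * MonoidAlgebra.single f' 1 : MonoidAlgebra K S).coeff.support.erase 0
          = (β.coeff.support.erase 0).image (· * f') := by
      intro f' h1 h2 h3
      apply core
      rw [← hQmul f' h3]
      have hcc := hf₀card
      rw [← hβ] at hcc
      rw [hcc]
      exact hmin f' h1 h2 (hQP f' h1 h2 h3)
    have hββ : (β * MonoidAlgebra.single f₀ 1 : MonoidAlgebra K S) = β := by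
      rw [hβ, mul_assoc, MonoidAlgebra.single_mul_single, one_mul, hf₀i]
    obtain ⟨hnz₀, hinj₀, himg₀⟩ := hcore f₀ hf₀i hf₀0 hf₀i
    rw [hββ] at himg₀
    have hP1 : ∀ u ∈ β.coeff.support.erase 0, u * f₀ = u := by
      intro u hu
      have huf : u * f₀ ∈ β.coeff.support.erase 0 := by
        rw [himg₀]
        exact Finset.mem_image.mpr ⟨u, hu, rfl⟩
      have hff : (u * f₀) * f₀ = u * f₀ := by rw [mul_assoc, hf₀i]
      exact hinj₀ _ huf _ hu hff
    have hP6 : ∀ u ∈ β.coeff.support.erase 0, star u * u = f₀ := by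
      intro u hu
      have hgi : ((star u * u) * f₀) * ((star u * u) * f₀) = (star u * u) * f₀ :=
        ISG.idem_mul_idem (ISG.idem_s's u) hf₀i
      have hgle : (star u * u) * f₀ = f₀ * ((star u * u) * f₀) := by
        rw [ISG.comm₃ hf₀i (ISG.idem_s's u), hf₀i]
      have hdens : ∀ f' : S, f' * f' = f' → f' ≠ 0 → f' = f₀ * f' →
          f' * ((star u * u) * f₀) ≠ 0 := by
        intro f' h1 h2 h3
        have huf : u * f' ≠ 0 := (hcore f' h1 h2 h3.symm).1 u hu
        have hcalc : f' * ((star u * u) * f₀) = (star u * u) * f' := by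
          rw [ISG.comm₃ h1 (ISG.idem_s's u), ISG.idem_comm h1 hf₀i, ← h3]
        rw [hcalc]
        intro hz
        apply huf
        apply ISG.eq_zero_of_s's
        rw [ISG.star_mul, ISG.star_idem h1]
        calc f' * star u * (u * f') = f' * ((star u * u) * f') := by simp only [mul_assoc]
          _ = 0 := by rw [hz, ISG.mzero]
      have hdd := ISG.density hcf hf₀i hf₀0 hgi hgle hdens
      calc star u * u = star u * (u * f₀) := by rw [hP1 u hu]
        _ = (star u * u) * f₀ := by rw [mul_assoc]
        _ = f₀ := hdd
    have hTne : (β.coeff.support.erase 0).Nonempty := by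
      by_contra hemp
      rw [Finset.not_nonempty_iff_eq_empty] at hemp
      apply hwit f₀ hf₀i hf₀0 ((ISG.natle_iff hf₀i).mpr hf₀e)
      rw [← hα]
      have h9 : mk0 K S α * iota K S f₀ = mk0 K S (α * MonoidAlgebra.single f₀ 1) := rfl
      rw [h9, mk0_zero_iff]
      intro s hs
      by_contra hco
      have hmem : s ∈ β.coeff.support.erase 0 := by
        rw [hβ]
        exact Finset.mem_erase.mpr ⟨hs, Finsupp.mem_support_iff.mpr hco⟩
      rw [hemp] at hmem
      exact Finset.notMem_empty s hmem
    obtain ⟨s₁, hs₁⟩ := hTne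
    have hs₁0 : s₁ ≠ 0 := (Finset.mem_erase.mp hs₁).1
    have hiter : ∀ D : Finset S, (D ⊆ (β.coeff.support.erase 0).erase s₁) →
        ∃ g : S, g * g = g ∧ g ≠ 0 ∧ f₀ * g = g ∧ ∀ u ∈ D, g * (star s₁ * u) * g = 0 := by
      intro D
      induction D using Finset.induction_on with
      | empty =>
        exact fun _ => ⟨f₀, hf₀i, hf₀0, hf₀i, fun u hu => absurd hu (Finset.notMem_empty u)⟩
      | @insert t D htD ih =>
        intro hsub
        have hsub' : D ⊆ (β.coeff.support.erase 0).erase s₁ :=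
          fun x hx => hsub (Finset.mem_insert_of_mem hx)
        obtain ⟨g, hgi, hg0, hgf, hall⟩ := ih hsub'
        have htT : t ∈ β.coeff.support.erase 0 :=
          Finset.mem_of_mem_erase (hsub (Finset.mem_insert_self t D))
        have hts₁ : t ≠ s₁ := (Finset.mem_erase.mp (hsub (Finset.mem_insert_self t D))).1
        rcases ISG.EG hcf (u := star s₁ * t) hgi hg0 with ⟨f', h1, h2, h3, h4⟩ | heq
        · refine ⟨f', h1, h2, ?_, ?_⟩
          · calc f₀ * f' = f₀ * (g * f') := by rw [← h3]
              _ = (f₀ * g) * f' := by rw [← mul_assoc]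
              _ = g * f' := by rw [hgf]
              _ = f' := h3.symm
          · intro u hu
            rcases Finset.mem_insert.mp hu with rfl | huD
            · exact h4
            · have hz := hall u huD
              have hfg' : f' * g = f' := by rw [ISG.idem_comm h1 hgi, ← h3]
              calc f' * (star s₁ * u) * f'
                  = (f' * g) * (star s₁ * u) * (g * f') := by rw [hfg', ← h3]
                _ = f' * ((g * (star s₁ * u) * g) * f') := by simp only [mul_assoc]
                _ = 0 := by rw [hz, ISG.zmul, ISG.mzero]
        · exfalso
          have hgeq := ISG.germ_eq hgi heq
          have heqst := (hcore g hgi hg0 hgf).2.1 s₁ hs₁ t htT hgeq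
          exact hts₁ heqst.symm
    obtain ⟨f₁, hf₁i, hf₁0, hf₁f, hf₁kill⟩ :=
      hiter ((β.coeff.support.erase 0).erase s₁) (subset_refl _)
    have hk0 : β.coeff s₁ ≠ 0 := Finsupp.mem_support_iff.mp (Finset.mem_of_mem_erase hs₁)
    have haf₁ : a * iota K S f₁ = mk0 K S (β * MonoidAlgebra.single f₁ 1) := by
      rw [← hα]
      have h9 : mk0 K S α * iota K S f₁ = mk0 K S (α * MonoidAlgebra.single f₁ 1) := rfl
      rw [h9, hQmul f₁ hf₁f]
    have hc : ∀ u ∈ β.coeff.support.erase 0,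
        (f₁ * star s₁) * (u * f₁) = if u = s₁ then f₁ else 0 := by
      intro u hu
      by_cases hus : u = s₁
      · subst hus
        rw [if_pos rfl]
        have h6 := hP6 u hu
        calc (f₁ * star u) * (u * f₁) = f₁ * ((star u * u) * f₁) := by simp only [mul_assoc]
          _ = f₁ * (f₀ * f₁) := by rw [h6]
          _ = f₁ * f₁ := by rw [hf₁f]
          _ = f₁ := hf₁i
      · rw [if_neg hus]
        have hkill := hf₁kill u (Finset.mem_erase.mpr ⟨hus, hu⟩)
        calc (f₁ * star s₁) * (u * f₁) = f₁ * (star s₁ * u) * f₁ := by simp only [mul_assoc]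
          _ = 0 := hkill
    have hd : iota K S (f₁ * star s₁) * (a * iota K S f₁)
        = mk0 K S (MonoidAlgebra.single f₁ (β.coeff s₁)) := by
      rw [haf₁, mul_single_expand]
      have hmulsum : (MonoidAlgebra.single (f₁ * star s₁) 1 : MonoidAlgebra K S) *
          (∑ u ∈ β.coeff.support.erase 0, MonoidAlgebra.single (u * f₁) (β.coeff u))
          = ∑ u ∈ β.coeff.support.erase 0,
              MonoidAlgebra.single ((f₁ * star s₁) * (u * f₁)) (β.coeff u) := by
        rw [Finset.mul_sum]
        apply Finset.sum_congr rfl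
        intro u _
        rw [MonoidAlgebra.single_mul_single, one_mul]
      have h7 : iota K S (f₁ * star s₁) *
            mk0 K S (∑ u ∈ β.coeff.support.erase 0, MonoidAlgebra.single (u * f₁) (β.coeff u))
          = mk0 K S (∑ u ∈ β.coeff.support.erase 0,
              MonoidAlgebra.single ((f₁ * star s₁) * (u * f₁)) (β.coeff u)) := by
        rw [iota, ← mk0_mul, hmulsum]
      rw [h7]
      have h8 : (∑ u ∈ β.coeff.support.erase 0,
          MonoidAlgebra.single ((f₁ * star s₁) * (u * f₁)) (β.coeff u) : MonoidAlgebra K S)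
          = ∑ u ∈ β.coeff.support.erase 0,
              MonoidAlgebra.single (if u = s₁ then f₁ else (0:S)) (β.coeff u) := by
        apply Finset.sum_congr rfl
        intro u hu
        rw [hc u hu]
      rw [h8, mk0_sum, Finset.sum_eq_single s₁]
      · rw [if_pos rfl]
      · intro u _ hus
        rw [if_neg hus, mk0_single_zero]
      · intro hnot
        exact absurd hs₁ hnot
    have hdJ : mk0 K S (MonoidAlgebra.single f₁ (β.coeff s₁)) ∈ J := by
      rw [← hd]
      have h1 : a * iota K S f₁ ∈ J := (hJ.2.2.2 a haJ (iota K S f₁)).2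
      exact (hJ.2.2.2 _ h1 _).1
    have hif₁ : iota K S f₁ ∈ J := by
      have h2 := (hJ.2.2.2 _ hdJ (mk0 K S (MonoidAlgebra.single f₁ (β.coeff s₁)⁻¹))).2
      have h3 : mk0 K S (MonoidAlgebra.single f₁ (β.coeff s₁)) *
          mk0 K S (MonoidAlgebra.single f₁ (β.coeff s₁)⁻¹) = iota K S f₁ := by
        rw [← mk0_mul, MonoidAlgebra.single_mul_single, hf₁i, mul_inv_cancel₀ hk0, iota]
      rwa [h3] at h2
    rw [Set.eq_univ_iff_forall]
    intro z
    obtain ⟨ξ, rfl⟩ := mk0_surjective K S z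
    have hAll : ∀ t : S, iota K S t ∈ J := by
      intro t
      by_cases ht : t = 0
      · subst ht; rw [iota_zero]; exact hJ.1
      rcases ISG.zsimple hcf hf₁0 t ht with rfl | ⟨u, rfl⟩ | ⟨v, rfl⟩ | ⟨u, v, rfl⟩
      · exact hif₁
      · rw [← iota_mul]; exact (hJ.2.2.2 _ hif₁ _).2
      · rw [← iota_mul]; exact (hJ.2.2.2 _ hif₁ _).1
      · rw [← iota_mul, ← iota_mul]
        exact (hJ.2.2.2 _ ((hJ.2.2.2 _ hif₁ _).1) _).2
    have hSingle : ∀ (t : S) (k : K), mk0 K S (MonoidAlgebra.single t k) ∈ J := by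
      intro t k
      by_cases ht : t = 0
      · subst ht; rw [mk0_single_zero]; exact hJ.1
      · rw [mk0_single_factor]
        exact (hJ.2.2.2 _ (hAll t) _).1
    have hdecomp : mk0 K S ξ = ∑ t ∈ ξ.coeff.support, mk0 K S (MonoidAlgebra.single t (ξ.coeff t)) := by
      conv_lhs => rw [← MonoidAlgebra.sum_coeff_single ξ]
      exact mk0_sum ξ.coeff.support (fun t => MonoidAlgebra.single t (ξ.coeff t))
    rw [hdecomp]
    exact Finset.sum_induction _ (· ∈ J) (fun x y hx hy => hJ.2.1 x hx y hy) hJ.1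
      (fun t _ => hSingle t (ξ.coeff t))
end

section
/- Let G be a group with a self-similar action on X* (X an alphabet with at least two letters), M = X*G the associated Zappa–Szép product monoid, S the inverse hull of M, and K a commutative ring. Write a ∈ KM uniquely as a = Σ_{w ∈ X*} w a_w with a_w ∈ KG. Then for u ∈ X*: a u = 0 if and only if a_w u = 0 for all w. Consequently a is singular in K₀S if and only if every a_w is singular in K₀S. -/
/-- A self-similar action of a group `G` on the free monoid on the alphabet `X`:
an action on letters together with restrictions `g|_x`, satisfying the self-similarity
axioms. -/
structure SelfSimilarAction (G X : Type*) [Group G] where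
  act : G → X → X
  res : G → X → G
  act_one : ∀ x, act 1 x = x
  act_mul : ∀ g h x, act (g * h) x = act g (act h x)
  res_one : ∀ x, res 1 x = 1
  res_mul : ∀ g h x, res (g * h) x = res g (act h x) * res h x

namespace SelfSimilarAction

variable {G X : Type*} [Group G] (σ : SelfSimilarAction G X)

/-- The induced action of `g ∈ G` on finite words. -/
def actW (g : G) : List X → List X
  | [] => []
  | x :: u => σ.act g x :: actW (σ.res g x) u

/-- The restriction `g|_w` of `g ∈ G` at a finite word `w`. -/
def resW (g : G) : List X → G
  | [] => g
  | x :: u => resW (σ.res g x) u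

/-- A word `w` is strongly fixed by `g` if `g(w) = w` and `g|_w = 1`. -/
def SFix (g : G) (w : List X) : Prop := σ.actW g w = w ∧ σ.resW g w = 1

/-- The self-similar action is faithful: `G` acts faithfully on `X*`. -/
def Faithful : Prop := ∀ g : G, (∀ w : List X, σ.actW g w = w) → g = 1

end SelfSimilarAction

namespace SelfSimilarAction

variable {G X : Type*} [Group G] (σ : SelfSimilarAction G X)

/-- The multiplication of the Zappa–Szép product monoid `M = X* G`:
`(u g)(v h) = (u g(v)) (g|_v h)`. -/
def mulM (m n : List X × G) : List X × G :=
  (m.1 ++ σ.actW m.2 n.1, σ.resW m.2 n.1 * n.2)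

variable {K : Type*} [CommRing K]

/-- Right multiplication of an element of the monoid algebra `KM` by an element of
`M = X* G`. -/
noncomputable def rconv (a : (List X × G) →₀ K) (m : List X × G) : (List X × G) →₀ K :=
  a.sum fun n c => Finsupp.single (σ.mulM n m) c

/-- The `KG`-component `a_w` of `a ∈ KM` in the decomposition `a = Σ_{w ∈ X*} w a_w`
of `KM` as a free right `KG`-module with basis `X*`. -/
noncomputable def gComp (a : (List X × G) →₀ K) (w : List X) : G →₀ K :=
  Finsupp.comapDomain (fun g => (w, g)) a
    (Set.injOn_of_injective (fun g h hq => congrArg Prod.snd hq))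

/-- The embedding of `KG` into `KM`. -/
noncomputable def gEmb (c : G →₀ K) : (List X × G) →₀ K :=
  Finsupp.mapDomain (fun g => (([] : List X), g)) c

/-- `c ∈ KM ⊆ K₀S` is singular in the contracted algebra `K₀S` of the inverse hull `S`
of `M`: for each `u ∈ X*` there exists `v ∈ X*` with `c u v = 0`. -/
noncomputable def SingularM (c : (List X × G) →₀ K) : Prop :=
  ∀ u : List X, ∃ v : List X, σ.rconv (σ.rconv c (u, 1)) (v, 1) = 0

end SelfSimilarAction

namespace SelfSimilarAction

variable {G X : Type*} [Group G] (σ : SelfSimilarAction G X)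

lemma length_actW (g : G) (u : List X) : (σ.actW g u).length = u.length := by
  induction u generalizing g with
  | nil => rfl
  | cons x u ih => simp [actW, ih]

lemma actW_append (g : G) (u v : List X) :
    σ.actW g (u ++ v) = σ.actW g u ++ σ.actW (σ.resW g u) v := by
  induction u generalizing g with
  | nil => rfl
  | cons x u ih => simp [actW, resW, ih]

lemma resW_append (g : G) (u v : List X) :
    σ.resW g (u ++ v) = σ.resW (σ.resW g u) v := by
  induction u generalizing g with
  | nil => rfl
  | cons x u ih => simp [resW, ih]

lemma mulM_mulM (n : List X × G) (u v : List X) :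
    σ.mulM (σ.mulM n (u, 1)) (v, 1) = σ.mulM n (u ++ v, 1) := by
  simp [mulM, actW_append, resW_append, List.append_assoc]

variable {K : Type*} [CommRing K]

lemma rconv_eq (a : (List X × G) →₀ K) (m : List X × G) :
    σ.rconv a m = Finsupp.mapDomain (fun n => σ.mulM n m) a := rfl

lemma rconv_zero (m : List X × G) : σ.rconv (0 : (List X × G) →₀ K) m = 0 := by
  simp [rconv]

lemma rconv_add (a b : (List X × G) →₀ K) (m : List X × G) :
    σ.rconv (a + b) m = σ.rconv a m + σ.rconv b m := by
  rw [rconv_eq, rconv_eq, rconv_eq, Finsupp.mapDomain_add]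

lemma rconv_single (n : List X × G) (c : K) (m : List X × G) :
    σ.rconv (Finsupp.single n c) m = Finsupp.single (σ.mulM n m) c := by
  rw [rconv_eq, Finsupp.mapDomain_single]

lemma rconv_rconv (a : (List X × G) →₀ K) (u v : List X) :
    σ.rconv (σ.rconv a (u, 1)) (v, 1) = σ.rconv a (u ++ v, 1) := by
  rw [rconv_eq, rconv_eq, rconv_eq, ← Finsupp.mapDomain_comp]
  exact Finsupp.mapDomain_congr fun n _ => σ.mulM_mulM n u v

lemma gComp_apply (a : (List X × G) →₀ K) (w : List X) (g : G) :
    gComp a w g = a (w, g) := rfl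

lemma gComp_zero (w : List X) : gComp (0 : (List X × G) →₀ K) w = 0 := by
  ext g; simp [gComp_apply]

lemma gComp_add (a b : (List X × G) →₀ K) (w : List X) :
    gComp (a + b) w = gComp a w + gComp b w := by
  ext g; simp [gComp_apply]

lemma gComp_single_self (w : List X) (g₀ : G) (c : K) :
    gComp (Finsupp.single ((w, g₀) : List X × G) c) w = Finsupp.single g₀ c := by
  classical
  ext g
  rw [gComp_apply, Finsupp.single_apply, Finsupp.single_apply]
  by_cases hg : g₀ = g
  · subst hg; simp
  · rw [if_neg hg, if_neg (by simp [Prod.ext_iff, hg])]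

lemma gComp_single_ne (w w' : List X) (hw : w' ≠ w) (g₀ : G) (c : K) :
    gComp (Finsupp.single ((w', g₀) : List X × G) c) w = 0 := by
  classical
  ext g
  rw [gComp_apply, Finsupp.single_apply, if_neg (by simp [Prod.ext_iff, hw])]
  simp

lemma gEmb_zero : (gEmb (0 : G →₀ K) : (List X × G) →₀ K) = 0 := by
  simp [gEmb]

lemma gEmb_add (c d : G →₀ K) :
    (gEmb (c + d) : (List X × G) →₀ K) = gEmb c + gEmb d := by
  simp [gEmb, Finsupp.mapDomain_add]

lemma gEmb_single (g₀ : G) (c : K) :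
    (gEmb (Finsupp.single g₀ c) : (List X × G) →₀ K) =
      Finsupp.single ((([] : List X), g₀)) c := by
  simp [gEmb, Finsupp.mapDomain_single]

/-- Key pointwise identity: the value of `a·u` at a point `(w ++ v, h)` with
`|v| = |u|` equals the value of `(w a_w)·u` at `(v, h)`. -/
lemma rconv_apply_append (a : (List X × G) →₀ K) (u w v : List X) (h : G)
    (hv : v.length = u.length) :
    σ.rconv (gEmb (gComp a w)) (u, 1) (v, h) = σ.rconv a (u, 1) (w ++ v, h) := by
  classical
  induction a using Finsupp.induction with
  | zero => simp [gComp_zero, gEmb_zero, σ.rconv_zero]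
  | single_add n c f hn hc ih =>
    obtain ⟨w', g₀⟩ := n
    rw [gComp_add, gEmb_add, σ.rconv_add, σ.rconv_add, Finsupp.add_apply, Finsupp.add_apply, ih]
    congr 1
    by_cases hw : w' = w
    · subst hw
      rw [gComp_single_self, gEmb_single, σ.rconv_single, σ.rconv_single,
        Finsupp.single_apply, Finsupp.single_apply]
      refine if_congr ?_ rfl rfl
      simp only [mulM, actW, List.nil_append, Prod.mk.injEq]
      rw [List.append_right_inj]
    · rw [gComp_single_ne _ _ hw, gEmb_zero, σ.rconv_zero, σ.rconv_single,
        Finsupp.zero_apply, Finsupp.single_apply, if_neg]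
      intro hEq
      simp only [mulM, Prod.mk.injEq] at hEq
      have hlen : (σ.actW g₀ u).length = v.length := by rw [σ.length_actW, hv]
      exact hw (List.append_inj' hEq.1 hlen).1

lemma rconv_apply_eq_zero_of_lt (a : (List X × G) →₀ K) (u p : List X) (h : G)
    (hp : p.length < u.length) :
    σ.rconv a (u, 1) (p, h) = 0 := by
  classical
  induction a using Finsupp.induction with
  | zero => rw [σ.rconv_zero]; rfl
  | single_add n c f hn hc ih =>
    rw [σ.rconv_add, Finsupp.add_apply, ih, add_zero, σ.rconv_single,
      Finsupp.single_apply, if_neg]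
    intro hEq
    simp only [mulM, Prod.mk.injEq] at hEq
    have := congrArg List.length hEq.1
    simp only [List.length_append, σ.length_actW] at this
    omega

lemma rconv_gEmb_apply_eq_zero (c : G →₀ K) (u v : List X) (h : G)
    (hv : v.length ≠ u.length) :
    σ.rconv (gEmb c) (u, 1) (v, h) = 0 := by
  classical
  induction c using Finsupp.induction with
  | zero => rw [gEmb_zero, σ.rconv_zero]; rfl
  | single_add g₀ c f hn hc ih =>
    rw [gEmb_add, σ.rconv_add, Finsupp.add_apply, ih, add_zero, gEmb_single,
      σ.rconv_single, Finsupp.single_apply, if_neg]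
    intro hEq
    simp only [mulM, actW, List.nil_append, Prod.mk.injEq] at hEq
    exact hv (by rw [← hEq.1, σ.length_actW])

/-- Given finitely many elements each of which can be killed on the right starting
from any word, there is a common right annihilating word. -/
lemma exists_common_kill (c : List X → ((List X × G) →₀ K)) (F : Finset (List X))
    (hc : ∀ w ∈ F, ∀ u : List X, ∃ v : List X, σ.rconv (c w) (u ++ v, 1) = 0) :
    ∀ u : List X, ∃ v : List X, ∀ w ∈ F, σ.rconv (c w) (u ++ v, 1) = 0 := by
  classical
  induction F using Finset.induction with
  | empty => intro u; exact ⟨[], by simp⟩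
  | insert w0 F hw0 ih =>
    intro u
    obtain ⟨v0, hv0⟩ := hc w0 (Finset.mem_insert_self _ _) u
    obtain ⟨v1, hv1⟩ := ih (fun w hw => hc w (Finset.mem_insert_of_mem hw)) (u ++ v0)
    refine ⟨v0 ++ v1, fun w hw => ?_⟩
    rw [← List.append_assoc]
    rcases Finset.mem_insert.mp hw with rfl | hw
    · rw [← σ.rconv_rconv, hv0, σ.rconv_zero]
    · exact hv1 w hw

end SelfSimilarAction

open SelfSimilarAction in
/-- Let `M = X* G` be the Zappa–Szép monoid of a self-similar action (with `|X| ≥ 2`),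
`S` its inverse hull and `K` a commutative ring.  Writing `a ∈ KM` uniquely as
`a = Σ_{w ∈ X*} w a_w` with `a_w ∈ KG`, for each `u ∈ X*` we have `a u = 0` iff
`a_w u = 0` for all `w`; consequently `a` is singular in `K₀S` iff every `a_w` is. -/
theorem stmt17 {G X K : Type*} [Group G] [CommRing K]
    (σ : SelfSimilarAction G X) (hX : ∃ x y : X, x ≠ y)
    (a : (List X × G) →₀ K) :
    (∀ u : List X,
      σ.rconv a (u, 1) = 0 ↔ ∀ w : List X, σ.rconv (gEmb (gComp a w)) (u, 1) = 0) ∧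
    (σ.SingularM a ↔ ∀ w : List X, σ.SingularM (gEmb (gComp a w))) := by
  classical
  have part1 : ∀ u : List X,
      σ.rconv a (u, 1) = 0 ↔ ∀ w : List X, σ.rconv (gEmb (gComp a w)) (u, 1) = 0 := by
    intro u
    constructor
    · intro h w
      ext nh
      obtain ⟨v, g⟩ := nh
      by_cases hv : v.length = u.length
      · rw [σ.rconv_apply_append a u w v g hv, h]; rfl
      · rw [σ.rconv_gEmb_apply_eq_zero _ u v g hv]; rfl
    · intro h
      ext nh
      obtain ⟨p, g⟩ := nh
      by_cases hp : u.length ≤ p.length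
      · have hsplit : p = p.take (p.length - u.length) ++ p.drop (p.length - u.length) :=
          (List.take_append_drop _ p).symm
        have hlen : (p.drop (p.length - u.length)).length = u.length := by
          rw [List.length_drop]; omega
        calc σ.rconv a (u, 1) (p, g)
            = σ.rconv a (u, 1) (p.take (p.length - u.length) ++ p.drop (p.length - u.length), g) := by
              rw [← hsplit]
          _ = σ.rconv (gEmb (gComp a (p.take (p.length - u.length)))) (u, 1)
                (p.drop (p.length - u.length), g) :=
              (σ.rconv_apply_append a u _ _ g hlen).symm
          _ = 0 := by rw [h _]; rfl
      · rw [σ.rconv_apply_eq_zero_of_lt a u p g (by omega)]; rfl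
  have sing_iff : ∀ c : (List X × G) →₀ K,
      σ.SingularM c ↔ ∀ u : List X, ∃ v : List X, σ.rconv c (u ++ v, 1) = 0 := by
    intro c
    constructor
    · intro h u
      obtain ⟨v, hv⟩ := h u
      exact ⟨v, by rwa [σ.rconv_rconv] at hv⟩
    · intro h u
      obtain ⟨v, hv⟩ := h u
      exact ⟨v, by rwa [σ.rconv_rconv]⟩
  refine ⟨part1, ?_⟩
  constructor
  · intro hs w
    rw [sing_iff]
    intro u
    obtain ⟨v, hv⟩ := (sing_iff a).mp hs u
    exact ⟨v, (part1 (u ++ v)).mp hv w⟩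
  · intro h
    rw [sing_iff]
    intro u
    obtain ⟨v, hv⟩ := σ.exists_common_kill (fun w => gEmb (gComp a w))
      (a.support.image Prod.fst) (fun w _ => (sing_iff _).mp (h w)) u
    refine ⟨v, ?_⟩
    rw [part1 (u ++ v)]
    intro w
    by_cases hw : w ∈ a.support.image Prod.fst
    · exact hv w hw
    · have hz : gComp a w = 0 := by
        ext g
        by_contra hg
        have hg' : a (w, g) ≠ 0 := by
          simpa [SelfSimilarAction.gComp_apply] using hg
        exact hw (Finset.mem_image.mpr ⟨(w, g), Finsupp.mem_support_iff.mpr hg', rfl⟩)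
      rw [hz, gEmb_zero, σ.rconv_zero]
end
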